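/- arXiv:1808.05923 — 2 statements merged into one kernel-verified Lean document; each statement's English description precedes it below -/
import Mathlib

section
/- Let n ≥ 1, n1 ≥ 2 with n1 even, m1, m2 ≥ 0 with m1+m2 ≥ 1, r ≥ 0, let d0 ∈ U(n; 2^{m1} 3^{m2}), d1 ∈ U(n1; 2^{m1} 3^{m2}), let d2 be a column-balanced n1×r matrix with entries in {1,2}, let D3 be the corresponding column augmented design, and let D3B be D3 with the two appended blocking columns. Then WD(D3B) ≥ LBW3B, where LBW3B = C(r+2) + (n²/(n+n1)²)·(3/2)^{r+2}·WD(d0) + (1/(n+n1)²)·(5/4)^{m1+1}·(23/18)^{m2+r}·( (3/2)·T1B + 2·(5/4)·T2B ), with φ1B = a·(m1+1)·(n1−2)/(2(n1−1)) + b·m2·(n1−3)/(3(n1−1)) + b·r·(n1−2)/(2(n1−1)), φ2B = a·(m1+1)/2 + b·m2/3, T1B = n1(n1−1)·e^{φ1B}, and T2B = n·n1·e^{φ2B}. -/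
open Finset

noncomputable section

namespace CAUD

/-- The mapped point value `u = (2x+1)/(2q)`. -/
def uVal (q x : ℕ) : ℝ := (2 * (x : ℝ) + 1) / (2 * (q : ℝ))

/-- The squared wrap-around L2-discrepancy of an `N × M` design whose `k`-th
column takes values in `{0, …, q k - 1}`. -/
def WD {N M : ℕ} (q : Fin M → ℕ) (x : Fin N → Fin M → ℕ) : ℝ :=
  -((4 : ℝ) / 3) ^ M + (1 / (N : ℝ) ^ 2) *
    ∑ i : Fin N, ∑ j : Fin N, ∏ k : Fin M,
      ((3 : ℝ) / 2 - |uVal (q k) (x i k) - uVal (q k) (x j k)| *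
        (1 - |uVal (q k) (x i k) - uVal (q k) (x j k)|))

/-- A mixed-level U-type design in `U(N; 2^{m1} 3^{m2})`: the first `m1` columns are
two-level and balanced, the last `m2` columns are three-level and balanced. -/
def IsUType (N m1 m2 : ℕ) (d : Fin N → Fin (m1 + m2) → ℕ) : Prop :=
  ∀ k : Fin (m1 + m2),
    if (k : ℕ) < m1 then
      (∀ i, d i k < 2) ∧ ∀ v < 2, 2 * (univ.filter (fun i => d i k = v)).card = N
    else
      (∀ i, d i k < 3) ∧ ∀ v < 3, 3 * (univ.filter (fun i => d i k = v)).card = N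

/-- A column-balanced `n1 × r` matrix with entries in `{1, 2}`: every column has
exactly `n1/2` entries equal to 1 and `n1/2` entries equal to 2. -/
def IsBalanced (n1 r : ℕ) (d2 : Fin n1 → Fin r → ℕ) : Prop :=
  (∀ i k, d2 i k = 1 ∨ d2 i k = 2) ∧
  ∀ k, 2 * (univ.filter (fun i => d2 i k = 1)).card = n1 ∧
       2 * (univ.filter (fun i => d2 i k = 2)).card = n1

/-- The column augmented design: first `n` rows are `(d0, 0)`, last `n1` rows `(d1, d2)`. -/
def augDesign (n n1 m r : ℕ) (d0 : Fin n → Fin m → ℕ) (d1 : Fin n1 → Fin m → ℕ)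
    (d2 : Fin n1 → Fin r → ℕ) : Fin (n + n1) → Fin (m + r) → ℕ := fun i k =>
  if hi : (i : ℕ) < n then
    if hk : (k : ℕ) < m then d0 ⟨i, hi⟩ ⟨k, hk⟩ else 0
  else
    if hk : (k : ℕ) < m then d1 ⟨(i : ℕ) - n, by have := i.isLt; omega⟩ ⟨k, hk⟩
    else d2 ⟨(i : ℕ) - n, by have := i.isLt; omega⟩ ⟨(k : ℕ) - m, by have := k.isLt; omega⟩

/-- Append one blocking column: 0 on the initial rows, 1 on the follow-up rows. -/
def appendOne (n n1 M : ℕ) (D : Fin (n + n1) → Fin M → ℕ) :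
    Fin (n + n1) → Fin (M + 1) → ℕ := fun i k =>
  if hk : (k : ℕ) < M then D i ⟨k, hk⟩ else if (i : ℕ) < n then 0 else 1

/-- Append two blocking columns: the first is 0 on the initial rows and 1 on the
follow-up rows; the second is 0 on the initial rows and the first `n1/2` follow-up
rows, and 1 on the remaining follow-up rows. -/
def appendTwo (n n1 M : ℕ) (D : Fin (n + n1) → Fin M → ℕ) :
    Fin (n + n1) → Fin (M + 2) → ℕ := fun i k =>
  if hk : (k : ℕ) < M then D i ⟨k, hk⟩
  else if (k : ℕ) = M then (if (i : ℕ) < n then 0 else 1)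
  else (if (i : ℕ) < n + n1 / 2 then 0 else 1)

/-- Level sizes of the (possibly blocking-augmented) column augmented design:
first `m1` columns are two-level, the next `m2 + r` are three-level, anything
after that (blocking columns) is two-level. -/
def qfun (m1 m2 r k : ℕ) : ℕ :=
  if k < m1 then 2 else if k < m1 + m2 + r then 3 else 2

/-- Coincidence number among the first `m1` columns. -/
def Fco {N M : ℕ} (m1 : ℕ) (D : Fin N → Fin M → ℕ) (i j : Fin N) : ℕ :=
  (univ.filter (fun k : Fin M => (k : ℕ) < m1 ∧ D i k = D j k)).card

/-- Coincidence number among columns `m1, …, m1 + m2 - 1`. -/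
def Vco {N M : ℕ} (m1 m2 : ℕ) (D : Fin N → Fin M → ℕ) (i j : Fin N) : ℕ :=
  (univ.filter (fun k : Fin M => m1 ≤ (k : ℕ) ∧ (k : ℕ) < m1 + m2 ∧ D i k = D j k)).card

/-- Coincidence number among the columns `≥ m`, counting agreements with common
value in `{1, 2}`. -/
def Tco {N M : ℕ} (m : ℕ) (D : Fin N → Fin M → ℕ) (i j : Fin N) : ℕ :=
  (univ.filter (fun k : Fin M =>
    m ≤ (k : ℕ) ∧ D i k = D j k ∧ (D i k = 1 ∨ D i k = 2))).card

/-- Total coincidence number between two rows. -/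
def lam {N M : ℕ} (D : Fin N → Fin M → ℕ) (i j : Fin N) : ℕ :=
  (univ.filter (fun k : Fin M => D i k = D j k)).card

/-- Number of rows whose `k`-th entry is `u` and whose `l`-th entry is `v`. -/
def nuv {N M : ℕ} (d : Fin N → Fin M → ℕ) (k l : Fin M) (u v : ℕ) : ℕ :=
  (univ.filter (fun i : Fin N => d i k = u ∧ d i l = v)).card

/-- Non-orthogonality of a pair of columns. -/
def fNOD {N M : ℕ} (q : Fin M → ℕ) (d : Fin N → Fin M → ℕ) (k l : Fin M) : ℝ :=
  ∑ u ∈ Finset.range (q k), ∑ v ∈ Finset.range (q l),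
    ((nuv d k l u v : ℝ) - (N : ℝ) / ((q k : ℝ) * (q l : ℝ))) ^ 2

/-- The `E(f_NOD)` criterion: average non-orthogonality over all pairs of columns. -/
def EfNOD {N M : ℕ} (q : Fin M → ℕ) (d : Fin N → Fin M → ℕ) : ℝ :=
  (∑ k : Fin M, ∑ l : Fin M, if (k : ℕ) < (l : ℕ) then fNOD q d k l else 0) /
    (Nat.choose M 2 : ℝ)

/-- Stacking the stage designs `d 0, …, d (l-1)` on top of one another. -/
def stack (M : ℕ) (ns : ℕ → ℕ) (d : (j : ℕ) → Fin (ns j) → Fin M → ℕ) :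
    (l : ℕ) → Fin (∑ j ∈ Finset.range l, ns j) → Fin M → ℕ
  | 0 => fun _ _ => 0
  | l + 1 => fun i =>
    let i' : Fin ((∑ j ∈ Finset.range l, ns j) + ns l) :=
      Fin.cast (Finset.sum_range_succ ns l) i
    if h : (i' : ℕ) < ∑ j ∈ Finset.range l, ns j then
      stack M ns d l ⟨(i' : ℕ), h⟩
    else d l ⟨(i' : ℕ) - ∑ j ∈ Finset.range l, ns j, by have := i'.isLt; omega⟩

def aa : ℝ := Real.log (6 / 5)

def bb : ℝ := Real.log (27 / 23)

/-- The constant `C(s)`. -/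
def Cconst (n n1 m s : ℕ) : ℝ :=
  -(((4 : ℝ) / 3) ^ s - ((n : ℝ) ^ 2 / ((n : ℝ) + n1) ^ 2) * ((3 : ℝ) / 2) ^ s) * ((4 : ℝ) / 3) ^ m
  + ((n1 : ℝ) / ((n : ℝ) + n1) ^ 2) * ((3 : ℝ) / 2) ^ (m + s)

def phi1 (n1 m1 m2 r : ℕ) : ℝ :=
  aa * m1 * ((n1 : ℝ) - 2) / (2 * ((n1 : ℝ) - 1)) + bb * m2 * ((n1 : ℝ) - 3) / (3 * ((n1 : ℝ) - 1))
  + bb * r * ((n1 : ℝ) - 2) / (2 * ((n1 : ℝ) - 1))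

def phi2 (m1 m2 : ℕ) : ℝ := aa * m1 / 2 + bb * m2 / 3

def T1c (n1 m1 m2 r : ℕ) : ℝ := (n1 : ℝ) * ((n1 : ℝ) - 1) * Real.exp (phi1 n1 m1 m2 r)

def T2c (n n1 m1 m2 : ℕ) : ℝ := (n : ℝ) * (n1 : ℝ) * Real.exp (phi2 m1 m2)

/-- Lower bound `LBW3` (mixed-level case, Theorem 1). -/
def LBW3 (n n1 m1 m2 r : ℕ) (wd0 : ℝ) : ℝ :=
  Cconst n n1 (m1 + m2) r + ((n : ℝ) ^ 2 / ((n : ℝ) + n1) ^ 2) * ((3 : ℝ) / 2) ^ r * wd0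
  + (1 / ((n : ℝ) + n1) ^ 2) * ((5 : ℝ) / 4) ^ m1 * ((23 : ℝ) / 18) ^ (m2 + r) *
      (T1c n1 m1 m2 r + 2 * T2c n n1 m1 m2)

def phi1p (n1 m r : ℕ) : ℝ :=
  aa * m * ((n1 : ℝ) - 2) / (2 * ((n1 : ℝ) - 1)) + bb * r * ((n1 : ℝ) - 2) / (2 * ((n1 : ℝ) - 1))

def T1pc (n1 m r : ℕ) : ℝ := (n1 : ℝ) * ((n1 : ℝ) - 1) * Real.exp (phi1p n1 m r)

def w1 (m : ℕ) : ℕ := m / 2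

def q1c (n n1 m : ℕ) : ℝ := (m : ℝ) * n * n1 / 2 - (n : ℝ) * n1 * (w1 m : ℝ)

def p1c (n n1 m : ℕ) : ℝ := (n : ℝ) * n1 - q1c n n1 m

/-- Lower bound `LBW3` for a two-level initial design (Theorem 2). -/
def LBW32 (n n1 m r : ℕ) (wd0 : ℝ) : ℝ :=
  Cconst n n1 m r + ((n : ℝ) ^ 2 / ((n : ℝ) + n1) ^ 2) * ((3 : ℝ) / 2) ^ r * wd0
  + (1 / ((n : ℝ) + n1) ^ 2) * ((5 : ℝ) / 4) ^ m * ((23 : ℝ) / 18) ^ r *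
      (T1pc n1 m r + 2 * (p1c n n1 m * ((6 : ℝ) / 5) ^ w1 m + q1c n n1 m * ((6 : ℝ) / 5) ^ (w1 m + 1)))

def w2 (n1 m r : ℕ) : ℤ :=
  ⌊(m : ℝ) * ((n1 : ℝ) - 3) / (3 * ((n1 : ℝ) - 1)) + (r : ℝ) * ((n1 : ℝ) - 2) / (2 * ((n1 : ℝ) - 1))⌋

def q2c (n1 m r : ℕ) : ℝ :=
  (m : ℝ) * n1 * ((n1 : ℝ) - 3) / 3 + (r : ℝ) * n1 * ((n1 : ℝ) - 2) / 2
  - (n1 : ℝ) * ((n1 : ℝ) - 1) * (w2 n1 m r : ℝ)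

def p2c (n1 m r : ℕ) : ℝ := (n1 : ℝ) * ((n1 : ℝ) - 1) - q2c n1 m r

def w3 (m : ℕ) : ℕ := m / 3

def q3c (n n1 m : ℕ) : ℝ := (m : ℝ) * n * n1 / 3 - (n : ℝ) * n1 * (w3 m : ℝ)

def p3c (n n1 m : ℕ) : ℝ := (n : ℝ) * n1 - q3c n n1 m

/-- Lower bound `LBW3` for a three-level initial design (Theorem 3). -/
def LBW33 (n n1 m r : ℕ) (wd0 : ℝ) : ℝ :=
  Cconst n n1 m r + ((n : ℝ) ^ 2 / ((n : ℝ) + n1) ^ 2) * ((3 : ℝ) / 2) ^ r * wd0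
  + (1 / ((n : ℝ) + n1) ^ 2) * ((23 : ℝ) / 18) ^ (m + r) *
      (p2c n1 m r * ((27 : ℝ) / 23) ^ w2 n1 m r + q2c n1 m r * ((27 : ℝ) / 23) ^ (w2 n1 m r + 1)
       + 2 * (p3c n n1 m * ((27 : ℝ) / 23) ^ w3 m + q3c n n1 m * ((27 : ℝ) / 23) ^ (w3 m + 1)))

/-- Lower bound of Theorem 4 for a mixed-level initial design. -/
def LBW3b1 (n n1 m1 m2 r : ℕ) (wd0 : ℝ) : ℝ :=
  Cconst n n1 (m1 + m2) (r + 1) + ((n : ℝ) ^ 2 / ((n : ℝ) + n1) ^ 2) * ((3 : ℝ) / 2) ^ (r + 1) * wd0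
  + (1 / ((n : ℝ) + n1) ^ 2) * ((5 : ℝ) / 4) ^ m1 * ((23 : ℝ) / 18) ^ (m2 + r) *
      ((3 : ℝ) / 2 * T1c n1 m1 m2 r + 2 * ((5 : ℝ) / 4) * T2c n n1 m1 m2)

/-- Lower bound of Theorem 4 for a two-level initial design. -/
def LBW3b2 (n n1 m r : ℕ) (wd0 : ℝ) : ℝ :=
  Cconst n n1 m (r + 1) + ((n : ℝ) ^ 2 / ((n : ℝ) + n1) ^ 2) * ((3 : ℝ) / 2) ^ (r + 1) * wd0
  + (1 / ((n : ℝ) + n1) ^ 2) * ((5 : ℝ) / 4) ^ m * ((23 : ℝ) / 18) ^ r *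
      ((3 : ℝ) / 2 * T1pc n1 m r +
        2 * ((5 : ℝ) / 4) * (p1c n n1 m * ((6 : ℝ) / 5) ^ w1 m + q1c n n1 m * ((6 : ℝ) / 5) ^ (w1 m + 1)))

/-- Lower bound of Theorem 4 for a three-level initial design. -/
def LBW3b3 (n n1 m r : ℕ) (wd0 : ℝ) : ℝ :=
  Cconst n n1 m (r + 1) + ((n : ℝ) ^ 2 / ((n : ℝ) + n1) ^ 2) * ((3 : ℝ) / 2) ^ (r + 1) * wd0
  + (1 / ((n : ℝ) + n1) ^ 2) * ((23 : ℝ) / 18) ^ (m + r) *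
      ((3 : ℝ) / 2 * (p2c n1 m r * ((27 : ℝ) / 23) ^ w2 n1 m r
                      + q2c n1 m r * ((27 : ℝ) / 23) ^ (w2 n1 m r + 1))
       + 2 * ((5 : ℝ) / 4) * (p3c n n1 m * ((27 : ℝ) / 23) ^ w3 m
                              + q3c n n1 m * ((27 : ℝ) / 23) ^ (w3 m + 1)))

def phi1B (n1 m1 m2 r : ℕ) : ℝ :=
  aa * ((m1 : ℝ) + 1) * ((n1 : ℝ) - 2) / (2 * ((n1 : ℝ) - 1))
  + bb * m2 * ((n1 : ℝ) - 3) / (3 * ((n1 : ℝ) - 1))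
  + bb * r * ((n1 : ℝ) - 2) / (2 * ((n1 : ℝ) - 1))

def phi2B (m1 m2 : ℕ) : ℝ := aa * ((m1 : ℝ) + 1) / 2 + bb * m2 / 3

def T1Bc (n1 m1 m2 r : ℕ) : ℝ := (n1 : ℝ) * ((n1 : ℝ) - 1) * Real.exp (phi1B n1 m1 m2 r)

def T2Bc (n n1 m1 m2 : ℕ) : ℝ := (n : ℝ) * (n1 : ℝ) * Real.exp (phi2B m1 m2)

/-- Lower bound `LBW3B` (Theorem 5). -/
def LBW3B (n n1 m1 m2 r : ℕ) (wd0 : ℝ) : ℝ :=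
  Cconst n n1 (m1 + m2) (r + 2) + ((n : ℝ) ^ 2 / ((n : ℝ) + n1) ^ 2) * ((3 : ℝ) / 2) ^ (r + 2) * wd0
  + (1 / ((n : ℝ) + n1) ^ 2) * ((5 : ℝ) / 4) ^ (m1 + 1) * ((23 : ℝ) / 18) ^ (m2 + r) *
      ((3 : ℝ) / 2 * T1Bc n1 m1 m2 r + 2 * ((5 : ℝ) / 4) * T2Bc n n1 m1 m2)

def psi1 (n1 m1 m2 r : ℕ) : ℤ :=
  ⌊((m1 : ℝ) * ((n1 : ℝ) - 2) / 2 + (m2 : ℝ) * ((n1 : ℝ) - 3) / 3 + (r : ℝ) * ((n1 : ℝ) - 2) / 2) /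
      ((n1 : ℝ) - 1)⌋

def eta1 (n1 m1 m2 r : ℕ) : ℝ :=
  (m1 : ℝ) * n1 * ((n1 : ℝ) - 2) / 2 + (m2 : ℝ) * n1 * ((n1 : ℝ) - 3) / 3
  + (r : ℝ) * n1 * ((n1 : ℝ) - 2) / 2 - (n1 : ℝ) * ((n1 : ℝ) - 1) * (psi1 n1 m1 m2 r : ℝ)

def zeta1 (n1 m1 m2 r : ℕ) : ℝ := (n1 : ℝ) * ((n1 : ℝ) - 1) - eta1 n1 m1 m2 r

def psi2 (m1 m2 : ℕ) : ℤ := ⌊(m1 : ℝ) / 2 + (m2 : ℝ) / 3⌋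

def eta2 (n n1 m1 m2 : ℕ) : ℝ :=
  (m1 : ℝ) * n * n1 / 2 + (m2 : ℝ) * n * n1 / 3 - (n : ℝ) * n1 * (psi2 m1 m2 : ℝ)

def zeta2 (n n1 m1 m2 : ℕ) : ℝ := (n : ℝ) * n1 - eta2 n n1 m1 m2

def Q1c (n1 m1 m2 r : ℕ) : ℝ :=
  zeta1 n1 m1 m2 r * (psi1 n1 m1 m2 r : ℝ) ^ 2 + eta1 n1 m1 m2 r * ((psi1 n1 m1 m2 r : ℝ) + 1) ^ 2

def Q1pc (n1 m1 m2 r : ℕ) : ℝ :=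
  zeta1 n1 m1 m2 r * ((psi1 n1 m1 m2 r : ℝ) + 1) ^ 2 + eta1 n1 m1 m2 r * ((psi1 n1 m1 m2 r : ℝ) + 2) ^ 2

def Q2c (n n1 m1 m2 : ℕ) : ℝ :=
  zeta2 n n1 m1 m2 * (psi2 m1 m2 : ℝ) ^ 2 + eta2 n n1 m1 m2 * ((psi2 m1 m2 : ℝ) + 1) ^ 2

/-- Lower bound `LBf3` for `E(f_NOD)` of the column augmented design. -/
def LBf3 (n n1 m1 m2 r : ℕ) (ef0 : ℝ) : ℝ :=
  ((m1 : ℝ) + m2) * ((m1 : ℝ) + m2 - 1) / (((m1 : ℝ) + m2 + r) * ((m1 : ℝ) + m2 + r - 1)) * ef0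
  + 1 / (((m1 : ℝ) + m2 + r) * ((m1 : ℝ) + m2 + r - 1)) * (Q1c n1 m1 m2 r + 2 * Q2c n n1 m1 m2)
  + ((n : ℝ) + n1) * ((m1 : ℝ) + m2 + r) / ((m1 : ℝ) + m2 + r - 1)
  - 1 / (((m1 : ℝ) + m2 + r) * ((m1 : ℝ) + m2 + r - 1)) *
    ((n : ℝ) * ((m1 : ℝ) + m2) ^ 2
      - (n : ℝ) ^ 2 * (((m1 : ℝ) + (m1 : ℝ) ^ 2) / 4 + (2 * (m2 : ℝ) + (m2 : ℝ) ^ 2) / 9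
          + (m1 : ℝ) * m2 / 3)
      - (r : ℝ) * m1 * n * ((n : ℝ) - 2)
      - 2 * (r : ℝ) * m2 * n * ((n : ℝ) - 3) / 3
      - (n : ℝ) * ((n : ℝ) - 1) * (r : ℝ) ^ 2
      + (r : ℝ) * ((n : ℝ) ^ 2 + (n1 : ℝ) ^ 2 / 2)
      + ((m1 : ℝ) / 2 + (m2 : ℝ) / 3 + (m1 : ℝ) * ((m1 : ℝ) - 1) / 4
          + ((m2 : ℝ) + r) * ((m2 : ℝ) + r - 1) / 9 + (m1 : ℝ) * ((m2 : ℝ) + r) / 3)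
        * ((n : ℝ) + n1) ^ 2)

/-- Lower bound `LBf3b` for `E(f_NOD)` of the design with one added blocking column. -/
def LBf3b (n n1 m1 m2 r : ℕ) (ef0 : ℝ) : ℝ :=
  ((m1 : ℝ) + m2) * ((m1 : ℝ) + m2 - 1) / (((m1 : ℝ) + m2 + r + 1) * ((m1 : ℝ) + m2 + r)) * ef0
  + 1 / (((m1 : ℝ) + m2 + r + 1) * ((m1 : ℝ) + m2 + r)) * (Q1pc n1 m1 m2 r + 2 * Q2c n n1 m1 m2)
  + ((n : ℝ) + n1) * ((m1 : ℝ) + m2 + r + 1) / ((m1 : ℝ) + m2 + r)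
  - 1 / (((m1 : ℝ) + m2 + r + 1) * ((m1 : ℝ) + m2 + r)) *
    ((n : ℝ) * ((m1 : ℝ) + m2) ^ 2
      - (n : ℝ) ^ 2 * (((m1 : ℝ) + (m1 : ℝ) ^ 2) / 4 + (2 * (m2 : ℝ) + (m2 : ℝ) ^ 2) / 9
          + (m1 : ℝ) * m2 / 3)
      - ((r : ℝ) + 1) * m1 * n * ((n : ℝ) - 2)
      - 2 * ((r : ℝ) + 1) * m2 * n * ((n : ℝ) - 3) / 3
      - (n : ℝ) * ((n : ℝ) - 1) * ((r : ℝ) + 1) ^ 2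
      + (r : ℝ) * ((n : ℝ) ^ 2 + (n1 : ℝ) ^ 2 / 2) + (n : ℝ) ^ 2 + (n1 : ℝ) ^ 2
      + ((m1 : ℝ) / 2 + (m2 : ℝ) / 3 + (m1 : ℝ) * ((m1 : ℝ) + 1) / 4
          + ((m2 : ℝ) + r) * ((m2 : ℝ) + r - 1) / 9 + ((m1 : ℝ) + 1) * ((m2 : ℝ) + r) / 3)
        * ((n : ℝ) + n1) ^ 2)

/-- Lower bound `LBf3B` for `E(f_NOD)` of the design with two added blocking columns. -/
def LBf3B (n n1 m1 m2 r : ℕ) (ef0 : ℝ) : ℝ :=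
  ((m1 : ℝ) + m2) * ((m1 : ℝ) + m2 - 1) / (((m1 : ℝ) + m2 + r + 2) * ((m1 : ℝ) + m2 + r + 1)) * ef0
  + 1 / (((m1 : ℝ) + m2 + r + 2) * ((m1 : ℝ) + m2 + r + 1)) *
      (Q1pc n1 (m1 + 1) m2 r + 2 * Q2c n n1 (m1 + 1) m2)
  + ((n : ℝ) + n1) * ((m1 : ℝ) + m2 + r + 2) / ((m1 : ℝ) + m2 + r + 1)
  - 1 / (((m1 : ℝ) + m2 + r + 2) * ((m1 : ℝ) + m2 + r + 1)) *
    ((n : ℝ) * ((m1 : ℝ) + m2) ^ 2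
      - (n : ℝ) ^ 2 * (((m1 : ℝ) + (m1 : ℝ) ^ 2) / 4 + (2 * (m2 : ℝ) + (m2 : ℝ) ^ 2) / 9
          + (m1 : ℝ) * m2 / 3)
      - ((r : ℝ) + 2) * m1 * n * ((n : ℝ) - 2)
      - 2 * ((r : ℝ) + 2) * m2 * n * ((n : ℝ) - 3) / 3
      - (n : ℝ) * ((n : ℝ) - 1) * ((r : ℝ) + 2) ^ 2
      + ((r : ℝ) + 2) * (n : ℝ) ^ 2 + (3 + (r : ℝ)) * (n1 : ℝ) ^ 2 / 2 + (n : ℝ) * n1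
      + ((m1 : ℝ) / 2 + (m2 : ℝ) / 3 + ((m1 : ℝ) + 2) * ((m1 : ℝ) + 1) / 4
          + ((m2 : ℝ) + r) * ((m2 : ℝ) + r - 1) / 9 + ((m1 : ℝ) + 2) * ((m2 : ℝ) + r) / 3)
        * ((n : ℝ) + n1) ^ 2)



section Eval
variable (n n1 m1 m2 r : ℕ) (d0 : Fin n → Fin (m1 + m2) → ℕ)
  (d1 : Fin n1 → Fin (m1 + m2) → ℕ) (d2 : Fin n1 → Fin r → ℕ)

lemma D_init_lo (i : Fin n) (k : Fin (m1+m2+r+2)) (hk : (k:ℕ) < m1+m2) :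
    appendTwo n n1 (m1+m2+r) (augDesign n n1 (m1+m2) r d0 d1 d2) (Fin.castAdd n1 i) k
      = d0 i ⟨(k:ℕ), hk⟩ := by
  simp only [appendTwo, augDesign, Fin.coe_castAdd]
  rw [dif_pos (show (k:ℕ) < m1+m2+r by omega), dif_pos i.isLt, dif_pos hk]

lemma D_init_hi (i : Fin n) (k : Fin (m1+m2+r+2)) (hk : m1+m2 ≤ (k:ℕ)) :
    appendTwo n n1 (m1+m2+r) (augDesign n n1 (m1+m2) r d0 d1 d2) (Fin.castAdd n1 i) k
      = 0 := by
  simp only [appendTwo, augDesign, Fin.coe_castAdd]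
  by_cases h1 : (k:ℕ) < m1+m2+r
  · rw [dif_pos h1, dif_pos i.isLt, dif_neg (by omega)]
  · rw [dif_neg h1]
    by_cases h2 : (k:ℕ) = m1+m2+r
    · rw [if_pos h2, if_pos i.isLt]
    · rw [if_neg h2, if_pos (show (i:ℕ) < n + n1/2 from by have := i.isLt; omega)]

lemma D_fu_lo (i : Fin n1) (k : Fin (m1+m2+r+2)) (hk : (k:ℕ) < m1+m2) :
    appendTwo n n1 (m1+m2+r) (augDesign n n1 (m1+m2) r d0 d1 d2) (Fin.natAdd n i) k
      = d1 i ⟨(k:ℕ), hk⟩ := by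
  simp only [appendTwo, augDesign, Fin.coe_natAdd]
  rw [dif_pos (show (k:ℕ) < m1+m2+r by omega), dif_neg (by omega), dif_pos hk]
  congr 1
  exact Fin.ext (by simp)

lemma D_fu_mid (i : Fin n1) (k : Fin (m1+m2+r+2)) (hk1 : m1+m2 ≤ (k:ℕ)) (hk2 : (k:ℕ) < m1+m2+r) :
    appendTwo n n1 (m1+m2+r) (augDesign n n1 (m1+m2) r d0 d1 d2) (Fin.natAdd n i) k
      = d2 i ⟨(k:ℕ) - (m1+m2), by omega⟩ := by
  simp only [appendTwo, augDesign, Fin.coe_natAdd]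
  rw [dif_pos hk2, dif_neg (by omega), dif_neg (by omega)]
  congr 1
  exact Fin.ext (by simp)

lemma D_fu_b1 (i : Fin n1) (k : Fin (m1+m2+r+2)) (hk : (k:ℕ) = m1+m2+r) :
    appendTwo n n1 (m1+m2+r) (augDesign n n1 (m1+m2) r d0 d1 d2) (Fin.natAdd n i) k
      = 1 := by
  simp only [appendTwo, Fin.coe_natAdd]
  rw [dif_neg (by omega), if_pos hk, if_neg (by omega)]

lemma D_fu_b2 (i : Fin n1) (k : Fin (m1+m2+r+2)) (hk : (k:ℕ) = m1+m2+r+1) :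
    appendTwo n n1 (m1+m2+r) (augDesign n n1 (m1+m2) r d0 d1 d2) (Fin.natAdd n i) k
      = if (i:ℕ) < n1/2 then 0 else 1 := by
  simp only [appendTwo, Fin.coe_natAdd]
  rw [dif_neg (by omega), if_neg (by omega)]
  by_cases h : (i:ℕ) < n1/2
  · rw [if_pos h, if_pos (by omega)]
  · rw [if_neg h, if_neg (by omega)]

end Eval
section AuxCAUD
open Finset

def cC (q : ℕ) : ℝ := if q = 2 then 5/4 else 23/18
def gLog (q : ℕ) : ℝ := if q = 2 then aa else bb
def cif (q x y : ℕ) : ℝ := if x = y then 3/2 else cC q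

lemma cif_self (q x : ℕ) : cif q x x = 3/2 := by simp [cif]

lemma cif_symm (q x y : ℕ) : cif q x y = cif q y x := by
  unfold cif; rcases eq_or_ne x y with rfl | h
  · simp
  · rw [if_neg h, if_neg (Ne.symm h)]

lemma exp_aa : Real.exp aa = 6/5 := Real.exp_log (by norm_num)
lemma exp_bb : Real.exp bb = 27/23 := Real.exp_log (by norm_num)

lemma kernel_eq (q x y : ℕ) (hq : q = 2 ∨ q = 3) (hx : x < q) (hy : y < q) :
    3/2 - |uVal q x - uVal q y| * (1 - |uVal q x - uVal q y|) = cif q x y := by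
  rcases hq with rfl | rfl <;> interval_cases x <;> interval_cases y <;>
      simp [uVal, cif, cC] <;> norm_num <;>
    rw [abs_of_nonneg (by norm_num)] <;> norm_num

lemma cif_eq_exp (q x y : ℕ) :
    cif q x y = cC q * Real.exp (if x = y then gLog q else 0) := by
  unfold cif cC gLog
  rcases eq_or_ne x y with rfl | h
  · simp only [if_pos rfl]
    by_cases h2 : q = 2 <;> simp [h2, exp_aa, exp_bb] <;> norm_num
  · simp [h]

lemma prod_cif_eq {M : ℕ} (q : Fin M → ℕ) (x y : Fin M → ℕ) :
    ∏ k : Fin M, cif (q k) (x k) (y k)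
      = (∏ k : Fin M, cC (q k)) *
        Real.exp (∑ k : Fin M, if x k = y k then gLog (q k) else 0) := by
  rw [Real.exp_sum, ← Finset.prod_mul_distrib]
  exact Finset.prod_congr rfl fun k _ => cif_eq_exp _ _ _

lemma jensen' {ι : Type*} (s : Finset ι) (hs : s.Nonempty) (f : ι → ℝ) :
    (s.card : ℝ) * Real.exp ((∑ i ∈ s, f i) / s.card) ≤ ∑ i ∈ s, Real.exp (f i) := by
  have hc : (0:ℝ) < s.card := by exact_mod_cast hs.card_pos
  have h := convexOn_exp.map_sum_le (t := s) (w := fun _ => (s.card : ℝ)⁻¹) (p := f)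
    (fun i _ => by positivity) (by simp [Finset.sum_const, mul_inv_cancel₀ hc.ne'])
    (fun i _ => trivial)
  simp only [smul_eq_mul, ← Finset.mul_sum] at h
  rw [div_eq_inv_mul]
  calc (s.card : ℝ) * Real.exp ((s.card:ℝ)⁻¹ * ∑ i ∈ s, f i)
      ≤ (s.card : ℝ) * ((s.card:ℝ)⁻¹ * ∑ i ∈ s, Real.exp (f i)) :=
        mul_le_mul_of_nonneg_left h hc.le
    _ = ∑ i ∈ s, Real.exp (f i) := by field_simp

lemma pair_count {p p' q : ℕ} (f : Fin p → ℕ) (g : Fin p' → ℕ) (hf : ∀ i, f i < q) :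
    ∑ i : Fin p, ∑ j : Fin p', (if f i = g j then (1:ℝ) else 0)
      = ∑ v ∈ Finset.range q,
          (∑ i : Fin p, if f i = v then (1:ℝ) else 0) *
          (∑ j : Fin p', if g j = v then (1:ℝ) else 0) := by
  have key : ∀ x y : ℕ, x < q → (if x = y then (1:ℝ) else 0)
      = ∑ v ∈ Finset.range q, (if x = v then (1:ℝ) else 0) * (if y = v then (1:ℝ) else 0) := by
    intro x y hx
    simp only [boole_mul]
    rw [Finset.sum_ite_eq (Finset.range q) x (fun v => if y = v then (1:ℝ) else 0),
      if_pos (Finset.mem_range.2 hx)]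
    rcases eq_or_ne x y with rfl | h
    · simp
    · simp [h, Ne.symm h]
  calc ∑ i : Fin p, ∑ j : Fin p', (if f i = g j then (1:ℝ) else 0)
      = ∑ i : Fin p, ∑ j : Fin p', ∑ v ∈ Finset.range q,
          (if f i = v then (1:ℝ) else 0) * (if g j = v then (1:ℝ) else 0) :=
        Finset.sum_congr rfl fun i _ => Finset.sum_congr rfl fun j _ => key _ _ (hf i)
    _ = ∑ i : Fin p, ∑ v ∈ Finset.range q, ∑ j : Fin p',
          (if f i = v then (1:ℝ) else 0) * (if g j = v then (1:ℝ) else 0) :=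
        Finset.sum_congr rfl fun i _ => by rw [Finset.sum_comm]
    _ = ∑ v ∈ Finset.range q, ∑ i : Fin p, ∑ j : Fin p',
          (if f i = v then (1:ℝ) else 0) * (if g j = v then (1:ℝ) else 0) := by
        rw [Finset.sum_comm]
    _ = ∑ v ∈ Finset.range q,
          (∑ i : Fin p, if f i = v then (1:ℝ) else 0) *
          (∑ j : Fin p', if g j = v then (1:ℝ) else 0) := by
        refine Finset.sum_congr rfl fun v _ => ?_
        rw [Finset.sum_mul]
        exact Finset.sum_congr rfl fun i _ => by rw [Finset.mul_sum]

lemma sum_boole_real {p : ℕ} (P : Fin p → Prop) [DecidablePred P] :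
    ∑ i : Fin p, (if P i then (1:ℝ) else 0) = (univ.filter P).card := by
  simp [Finset.sum_boole]

lemma half_real {c p : ℕ} (h : 2 * c = p) : (c:ℝ) = p/2 := by
  have : ((2*c : ℕ):ℝ) = p := by exact_mod_cast congrArg (Nat.cast : ℕ → ℝ) h
  push_cast at this; linarith

lemma third_real {c p : ℕ} (h : 3 * c = p) : (c:ℝ) = p/3 := by
  have : ((3*c : ℕ):ℝ) = p := by exact_mod_cast congrArg (Nat.cast : ℕ → ℝ) h
  push_cast at this; linarith

lemma card_filter_coe_lt (n1 t : ℕ) (h : t ≤ n1) :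
    (univ.filter fun i : Fin n1 => (i:ℕ) < t).card = t := by
  have : (univ.filter fun i : Fin n1 => (i:ℕ) < t)
      = Finset.map (Fin.castLEEmb h) univ := by
    ext j
    simp only [Finset.mem_filter, Finset.mem_map, Finset.mem_univ, true_and]
    constructor
    · intro hj; exact ⟨⟨(j:ℕ), hj⟩, by simp [Fin.castLEEmb, Fin.ext_iff]⟩
    · rintro ⟨i, hi⟩; rw [← hi]; simp [Fin.castLEEmb]
  rw [this, Finset.card_map, Finset.card_univ, Fintype.card_fin]

lemma sum_fin_ite_lt (m1 m2 : ℕ) (A B : ℝ) :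
    ∑ k : Fin (m1+m2), (if (k:ℕ) < m1 then A else B) = m1 * A + m2 * B := by
  rw [Finset.sum_ite, Finset.sum_const, Finset.sum_const]
  have h1 : (univ.filter fun k : Fin (m1+m2) => (k:ℕ) < m1).card = m1 :=
    card_filter_coe_lt _ _ (Nat.le_add_right _ _)
  have h2 : (univ.filter fun k : Fin (m1+m2) => ¬ (k:ℕ) < m1).card = m2 := by
    have := Finset.card_filter_add_card_filter_not
      (s := (univ : Finset (Fin (m1+m2)))) (p := fun k => (k:ℕ) < m1)
    rw [Finset.card_univ, Fintype.card_fin] at this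
    omega
  rw [h1, h2, nsmul_eq_mul, nsmul_eq_mul]

lemma prod_fin_ite_lt (m1 m2 : ℕ) (A B : ℝ) :
    ∏ k : Fin (m1+m2), (if (k:ℕ) < m1 then A else B) = A ^ m1 * B ^ m2 := by
  rw [Finset.prod_ite, Finset.prod_const, Finset.prod_const]
  have h1 : (univ.filter fun k : Fin (m1+m2) => (k:ℕ) < m1).card = m1 :=
    card_filter_coe_lt _ _ (Nat.le_add_right _ _)
  have h2 : (univ.filter fun k : Fin (m1+m2) => ¬ (k:ℕ) < m1).card = m2 := by
    have := Finset.card_filter_add_card_filter_not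
      (s := (univ : Finset (Fin (m1+m2)))) (p := fun k => (k:ℕ) < m1)
    rw [Finset.card_univ, Fintype.card_fin] at this
    omega
  rw [h1, h2]

lemma E_two {p p' : ℕ} (f : Fin p → ℕ) (g : Fin p' → ℕ)
    (hf : ∀ i, f i < 2)
    (hbf : ∀ v < 2, 2 * ((univ.filter fun i => f i = v)).card = p)
    (hbg : ∀ v < 2, 2 * ((univ.filter fun j => g j = v)).card = p') :
    ∑ i : Fin p, ∑ j : Fin p', (if f i = g j then (1:ℝ) else 0) = p * p' / 2 := by
  rw [pair_count f g hf, Finset.sum_range_succ, Finset.sum_range_one]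
  rw [sum_boole_real, sum_boole_real, sum_boole_real, sum_boole_real]
  rw [half_real (hbf 0 (by norm_num)), half_real (hbf 1 (by norm_num)),
    half_real (hbg 0 (by norm_num)), half_real (hbg 1 (by norm_num))]
  ring

lemma E_three {p p' : ℕ} (f : Fin p → ℕ) (g : Fin p' → ℕ)
    (hf : ∀ i, f i < 3)
    (hbf : ∀ v < 3, 3 * ((univ.filter fun i => f i = v)).card = p)
    (hbg : ∀ v < 3, 3 * ((univ.filter fun j => g j = v)).card = p') :
    ∑ i : Fin p, ∑ j : Fin p', (if f i = g j then (1:ℝ) else 0) = p * p' / 3 := by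
  rw [pair_count f g hf, Finset.sum_range_succ, Finset.sum_range_succ, Finset.sum_range_one]
  rw [sum_boole_real, sum_boole_real, sum_boole_real, sum_boole_real, sum_boole_real,
    sum_boole_real]
  rw [third_real (hbf 0 (by norm_num)), third_real (hbf 1 (by norm_num)),
    third_real (hbf 2 (by norm_num)), third_real (hbg 0 (by norm_num)),
    third_real (hbg 1 (by norm_num)), third_real (hbg 2 (by norm_num))]
  ring

lemma E_d2sq {p : ℕ} (f : Fin p → ℕ) (hf : ∀ i, f i = 1 ∨ f i = 2)
    (hb1 : 2 * ((univ.filter fun i => f i = 1)).card = p)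
    (hb2 : 2 * ((univ.filter fun i => f i = 2)).card = p) :
    ∑ i : Fin p, ∑ j : Fin p, (if f i = f j then (1:ℝ) else 0) = (p:ℝ) * p / 2 := by
  rw [pair_count (q := 3) f f (fun i => by rcases hf i with h|h <;> omega),
    Finset.sum_range_succ, Finset.sum_range_succ, Finset.sum_range_one]
  have z : (∑ i : Fin p, if f i = 0 then (1:ℝ) else 0) = 0 :=
    Finset.sum_eq_zero fun i _ => by rcases hf i with h|h <;> simp [h]
  rw [z, sum_boole_real, sum_boole_real, half_real hb1, half_real hb2]
  ring

end AuxCAUD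
section Aux2
open Finset

variable (n n1 m1 m2 r : ℕ)

lemma qfun_lo (k : ℕ) (hk : k < m1+m2) : qfun m1 m2 r k = if k < m1 then 2 else 3 := by
  unfold qfun
  by_cases h : k < m1
  · simp [h]
  · rw [if_neg h, if_pos (by omega), if_neg h]

lemma qfun_eq0 (k : ℕ) (hk : k < m1+m2) : qfun m1 m2 r k = qfun m1 m2 0 k := by
  rw [qfun_lo m1 m2 r k hk, qfun_lo m1 m2 0 k hk]

lemma qfun_mid (k : ℕ) (hk1 : m1+m2 ≤ k) (hk2 : k < m1+m2+r) : qfun m1 m2 r k = 3 := by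
  unfold qfun; rw [if_neg (by omega), if_pos hk2]

lemma qfun_hi (k : ℕ) (hk : m1+m2+r ≤ k) : qfun m1 m2 r k = 2 := by
  unfold qfun; rw [if_neg (by omega), if_neg (by omega)]

lemma qfun_23 (k : ℕ) : qfun m1 m2 r k = 2 ∨ qfun m1 m2 r k = 3 := by
  unfold qfun; split_ifs <;> simp

lemma cC_lo (k : ℕ) (hk : k < m1+m2) :
    cC (qfun m1 m2 r k) = if k < m1 then (5/4:ℝ) else 23/18 := by
  rw [qfun_lo m1 m2 r k hk]
  by_cases h : k < m1 <;> simp [h, cC]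

lemma gLog_lo (k : ℕ) (hk : k < m1+m2) :
    gLog (qfun m1 m2 r k) = if k < m1 then aa else bb := by
  rw [qfun_lo m1 m2 r k hk]
  by_cases h : k < m1 <;> simp [h, gLog]

lemma prodC : ∏ k : Fin (m1+m2+r+2), cC (qfun m1 m2 r (k:ℕ))
    = (5/4:ℝ)^m1 * (23/18:ℝ)^(m2+r) * (5/4:ℝ)^2 := by
  calc ∏ k : Fin (m1+m2+r+2), cC (qfun m1 m2 r (k:ℕ))
      = (∏ k : Fin (m1+m2), cC (qfun m1 m2 r ((Fin.castAdd (r+2) k : ℕ)))) *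
        ∏ k : Fin (r+2), cC (qfun m1 m2 r ((Fin.natAdd (m1+m2) k : ℕ))) :=
      Fin.prod_univ_add (f := fun k : Fin ((m1+m2)+(r+2)) => cC (qfun m1 m2 r (k:ℕ)))
    _ = ((5/4:ℝ)^m1 * (23/18:ℝ)^m2) * ((23/18:ℝ)^r * (5/4:ℝ)^2) := by
        congr 1
        · rw [← prod_fin_ite_lt m1 m2 (5/4:ℝ) (23/18:ℝ)]
          exact Finset.prod_congr rfl fun k _ => by
            rw [Fin.coe_castAdd, cC_lo m1 m2 r _ k.isLt]
        · calc ∏ k : Fin (r+2), cC (qfun m1 m2 r ((Fin.natAdd (m1+m2) k : ℕ)))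
              = (∏ k : Fin r, cC (qfun m1 m2 r ((Fin.natAdd (m1+m2) (Fin.castAdd 2 k) : ℕ)))) *
                ∏ k : Fin 2, cC (qfun m1 m2 r ((Fin.natAdd (m1+m2) (Fin.natAdd r k) : ℕ))) :=
              Fin.prod_univ_add
                (f := fun k : Fin (r+2) => cC (qfun m1 m2 r ((Fin.natAdd (m1+m2) k : ℕ))))
            _ = (23/18:ℝ)^r * (5/4:ℝ)^2 := by
                congr 1
                · rw [show (∏ k : Fin r, cC (qfun m1 m2 r ((Fin.natAdd (m1+m2) (Fin.castAdd 2 k) : ℕ)))) = ∏ _k : Fin r, (23/18:ℝ) from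
                    Finset.prod_congr rfl fun k _ => by
                      rw [Fin.coe_natAdd, Fin.coe_castAdd,
                        qfun_mid m1 m2 r _ (by omega) (by have := k.isLt; omega)]; simp [cC],
                    Finset.prod_const, Finset.card_univ, Fintype.card_fin]
                · rw [show (∏ k : Fin 2, cC (qfun m1 m2 r ((Fin.natAdd (m1+m2) (Fin.natAdd r k) : ℕ)))) = ∏ _k : Fin 2, (5/4:ℝ) from
                    Finset.prod_congr rfl fun k _ => by
                      rw [Fin.coe_natAdd, Fin.coe_natAdd, qfun_hi m1 m2 r _ (by omega)]; simp [cC],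
                    Finset.prod_const, Finset.card_univ, Fintype.card_fin]
    _ = (5/4:ℝ)^m1 * (23/18:ℝ)^(m2+r) * (5/4:ℝ)^2 := by rw [pow_add]; ring

lemma Wsum : ∑ k : Fin (m1+m2+r+2), gLog (qfun m1 m2 r (k:ℕ))
    = (m1:ℝ) * aa + m2 * bb + ((r:ℝ) * bb + 2 * aa) := by
  calc ∑ k : Fin (m1+m2+r+2), gLog (qfun m1 m2 r (k:ℕ))
      = (∑ k : Fin (m1+m2), gLog (qfun m1 m2 r ((Fin.castAdd (r+2) k : ℕ)))) +
        ∑ k : Fin (r+2), gLog (qfun m1 m2 r ((Fin.natAdd (m1+m2) k : ℕ))) :=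
      Fin.sum_univ_add (f := fun k : Fin ((m1+m2)+(r+2)) => gLog (qfun m1 m2 r (k:ℕ)))
    _ = ((m1:ℝ) * aa + m2 * bb) + ((r:ℝ) * bb + 2 * aa) := by
        congr 1
        · rw [← sum_fin_ite_lt m1 m2 aa bb]
          exact Finset.sum_congr rfl fun k _ => by
            rw [Fin.coe_castAdd, gLog_lo m1 m2 r _ k.isLt]
        · calc ∑ k : Fin (r+2), gLog (qfun m1 m2 r ((Fin.natAdd (m1+m2) k : ℕ)))
              = (∑ k : Fin r, gLog (qfun m1 m2 r ((Fin.natAdd (m1+m2) (Fin.castAdd 2 k) : ℕ)))) +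
                ∑ k : Fin 2, gLog (qfun m1 m2 r ((Fin.natAdd (m1+m2) (Fin.natAdd r k) : ℕ))) :=
              Fin.sum_univ_add
                (f := fun k : Fin (r+2) => gLog (qfun m1 m2 r ((Fin.natAdd (m1+m2) k : ℕ))))
            _ = (r:ℝ) * bb + 2 * aa := by
                congr 1
                · rw [show (∑ k : Fin r, gLog (qfun m1 m2 r ((Fin.natAdd (m1+m2) (Fin.castAdd 2 k) : ℕ)))) = ∑ _k : Fin r, bb from
                    Finset.sum_congr rfl fun k _ => by
                      rw [Fin.coe_natAdd, Fin.coe_castAdd,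
                        qfun_mid m1 m2 r _ (by omega) (by have := k.isLt; omega)]; simp [gLog],
                    Finset.sum_const, Finset.card_univ, Fintype.card_fin, nsmul_eq_mul]
                · rw [show (∑ k : Fin 2, gLog (qfun m1 m2 r ((Fin.natAdd (m1+m2) (Fin.natAdd r k) : ℕ)))) = ∑ _k : Fin 2, aa from
                    Finset.sum_congr rfl fun k _ => by
                      rw [Fin.coe_natAdd, Fin.coe_natAdd, qfun_hi m1 m2 r _ (by omega)]; simp [gLog],
                    Finset.sum_const, Finset.card_univ, Fintype.card_fin, nsmul_eq_mul]
                  ring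

end Aux2
section Aux3
open Finset

def DD (n n1 m1 m2 r : ℕ) (d0 : Fin n → Fin (m1+m2) → ℕ) (d1 : Fin n1 → Fin (m1+m2) → ℕ)
    (d2 : Fin n1 → Fin r → ℕ) : Fin (n+n1) → Fin (m1+m2+r+2) → ℕ :=
  appendTwo n n1 (m1+m2+r) (augDesign n n1 (m1+m2) r d0 d1 d2)

variable (n n1 m1 m2 r : ℕ) (d0 : Fin n → Fin (m1 + m2) → ℕ)
  (d1 : Fin n1 → Fin (m1 + m2) → ℕ) (d2 : Fin n1 → Fin r → ℕ)

lemma DD_init_lo (i : Fin n) (k : Fin (m1+m2+r+2)) (hk : (k:ℕ) < m1+m2) :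
    DD n n1 m1 m2 r d0 d1 d2 (Fin.castAdd n1 i) k = d0 i ⟨(k:ℕ), hk⟩ :=
  D_init_lo n n1 m1 m2 r d0 d1 d2 i k hk

lemma DD_init_hi (i : Fin n) (k : Fin (m1+m2+r+2)) (hk : m1+m2 ≤ (k:ℕ)) :
    DD n n1 m1 m2 r d0 d1 d2 (Fin.castAdd n1 i) k = 0 :=
  D_init_hi n n1 m1 m2 r d0 d1 d2 i k hk

lemma DD_fu_lo (i : Fin n1) (k : Fin (m1+m2+r+2)) (hk : (k:ℕ) < m1+m2) :
    DD n n1 m1 m2 r d0 d1 d2 (Fin.natAdd n i) k = d1 i ⟨(k:ℕ), hk⟩ :=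
  D_fu_lo n n1 m1 m2 r d0 d1 d2 i k hk

lemma DD_fu_mid (i : Fin n1) (k : Fin (m1+m2+r+2)) (hk1 : m1+m2 ≤ (k:ℕ)) (hk2 : (k:ℕ) < m1+m2+r) :
    DD n n1 m1 m2 r d0 d1 d2 (Fin.natAdd n i) k = d2 i ⟨(k:ℕ) - (m1+m2), by omega⟩ :=
  D_fu_mid n n1 m1 m2 r d0 d1 d2 i k hk1 hk2

lemma DD_fu_b1 (i : Fin n1) (k : Fin (m1+m2+r+2)) (hk : (k:ℕ) = m1+m2+r) :
    DD n n1 m1 m2 r d0 d1 d2 (Fin.natAdd n i) k = 1 :=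
  D_fu_b1 n n1 m1 m2 r d0 d1 d2 i k hk

lemma DD_fu_b2 (i : Fin n1) (k : Fin (m1+m2+r+2)) (hk : (k:ℕ) = m1+m2+r+1) :
    DD n n1 m1 m2 r d0 d1 d2 (Fin.natAdd n i) k = if (i:ℕ) < n1/2 then 0 else 1 :=
  D_fu_b2 n n1 m1 m2 r d0 d1 d2 i k hk

lemma D_lt (hd0 : IsUType n m1 m2 d0) (hd1 : IsUType n1 m1 m2 d1)
    (hd2v : ∀ i k, d2 i k = 1 ∨ d2 i k = 2) :
    ∀ (i : Fin (n+n1)) (k : Fin (m1+m2+r+2)),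
      DD n n1 m1 m2 r d0 d1 d2 i k < qfun m1 m2 r (k:ℕ) := by
  intro i k
  by_cases hi : (i:ℕ) < n
  · have hi' : i = Fin.castAdd n1 ⟨(i:ℕ), hi⟩ := Fin.ext rfl
    rw [hi']
    by_cases hk : (k:ℕ) < m1+m2
    · rw [DD_init_lo n n1 m1 m2 r d0 d1 d2 _ k hk, qfun_lo m1 m2 r _ hk]
      have h := hd0 ⟨(k:ℕ), hk⟩
      by_cases h1 : (k:ℕ) < m1
      · rw [if_pos h1] at h ⊢; exact h.1 _
      · rw [if_neg h1] at h ⊢; exact h.1 _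
    · rw [DD_init_hi n n1 m1 m2 r d0 d1 d2 _ k (le_of_not_gt hk)]
      rcases qfun_23 m1 m2 r (k:ℕ) with h|h <;> omega
  · have hi' : i = Fin.natAdd n ⟨(i:ℕ)-n, by have := i.isLt; omega⟩ := Fin.ext (by simp; omega)
    rw [hi']
    by_cases hk : (k:ℕ) < m1+m2
    · rw [DD_fu_lo n n1 m1 m2 r d0 d1 d2 _ k hk, qfun_lo m1 m2 r _ hk]
      have h := hd1 ⟨(k:ℕ), hk⟩
      by_cases h1 : (k:ℕ) < m1
      · rw [if_pos h1] at h ⊢; exact h.1 _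
      · rw [if_neg h1] at h ⊢; exact h.1 _
    · by_cases hk2 : (k:ℕ) < m1+m2+r
      · rw [DD_fu_mid n n1 m1 m2 r d0 d1 d2 _ k (le_of_not_gt hk) hk2,
          qfun_mid m1 m2 r _ (le_of_not_gt hk) hk2]
        have h3 : ∀ (a : Fin n1) (b : Fin r), d2 a b < 3 := fun a b => by
          rcases hd2v a b with h|h <;> omega
        exact h3 _ _
      · by_cases hk3 : (k:ℕ) = m1+m2+r
        · rw [DD_fu_b1 n n1 m1 m2 r d0 d1 d2 _ k hk3, qfun_hi m1 m2 r _ (by omega)]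
          omega
        · rw [DD_fu_b2 n n1 m1 m2 r d0 d1 d2 _ k (by have := k.isLt; omega),
            qfun_hi m1 m2 r _ (by omega)]
          split <;> omega

lemma BlockInit (i j : Fin n) :
    ∏ k : Fin (m1+m2+r+2),
        cif (qfun m1 m2 r (k:ℕ)) (DD n n1 m1 m2 r d0 d1 d2 (Fin.castAdd n1 i) k)
          (DD n n1 m1 m2 r d0 d1 d2 (Fin.castAdd n1 j) k)
      = (3/2:ℝ)^(r+2) *
        ∏ k : Fin (m1+m2), cif (qfun m1 m2 0 (k:ℕ)) (d0 i k) (d0 j k) := by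
  calc ∏ k : Fin (m1+m2+r+2),
        cif (qfun m1 m2 r (k:ℕ)) (DD n n1 m1 m2 r d0 d1 d2 (Fin.castAdd n1 i) k)
          (DD n n1 m1 m2 r d0 d1 d2 (Fin.castAdd n1 j) k)
      = (∏ k : Fin (m1+m2),
          cif (qfun m1 m2 r ((Fin.castAdd (r+2) k : ℕ)))
            (DD n n1 m1 m2 r d0 d1 d2 (Fin.castAdd n1 i) (Fin.castAdd (r+2) k))
            (DD n n1 m1 m2 r d0 d1 d2 (Fin.castAdd n1 j) (Fin.castAdd (r+2) k))) *
        ∏ k : Fin (r+2),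
          cif (qfun m1 m2 r ((Fin.natAdd (m1+m2) k : ℕ)))
            (DD n n1 m1 m2 r d0 d1 d2 (Fin.castAdd n1 i) (Fin.natAdd (m1+m2) k))
            (DD n n1 m1 m2 r d0 d1 d2 (Fin.castAdd n1 j) (Fin.natAdd (m1+m2) k)) :=
      Fin.prod_univ_add (f := fun k : Fin ((m1+m2)+(r+2)) =>
        cif (qfun m1 m2 r (k:ℕ)) (DD n n1 m1 m2 r d0 d1 d2 (Fin.castAdd n1 i) k)
          (DD n n1 m1 m2 r d0 d1 d2 (Fin.castAdd n1 j) k))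
    _ = (∏ k : Fin (m1+m2), cif (qfun m1 m2 0 (k:ℕ)) (d0 i k) (d0 j k)) * (3/2:ℝ)^(r+2) := by
        congr 1
        · refine Finset.prod_congr rfl fun k _ => ?_
          have hk : ((Fin.castAdd (r+2) k : ℕ)) < m1+m2 := k.isLt
          rw [DD_init_lo n n1 m1 m2 r d0 d1 d2 i _ hk, DD_init_lo n n1 m1 m2 r d0 d1 d2 j _ hk,
            qfun_eq0 m1 m2 r _ hk]
          simp [Fin.eta]
        · rw [show (∏ k : Fin (r+2),
              cif (qfun m1 m2 r ((Fin.natAdd (m1+m2) k : ℕ)))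
                (DD n n1 m1 m2 r d0 d1 d2 (Fin.castAdd n1 i) (Fin.natAdd (m1+m2) k))
                (DD n n1 m1 m2 r d0 d1 d2 (Fin.castAdd n1 j) (Fin.natAdd (m1+m2) k)))
              = ∏ _k : Fin (r+2), (3/2:ℝ) from
            Finset.prod_congr rfl fun k _ => by
              rw [DD_init_hi n n1 m1 m2 r d0 d1 d2 i _ (by simp),
                DD_init_hi n n1 m1 m2 r d0 d1 d2 j _ (by simp), cif_self],
            Finset.prod_const, Finset.card_univ, Fintype.card_fin]
    _ = _ := by ring

lemma BlockDiag (x : Fin (n+n1)) :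
    ∏ k : Fin (m1+m2+r+2),
        cif (qfun m1 m2 r (k:ℕ)) (DD n n1 m1 m2 r d0 d1 d2 x k) (DD n n1 m1 m2 r d0 d1 d2 x k)
      = (3/2:ℝ)^(m1+m2+r+2) := by
  rw [show (∏ k : Fin (m1+m2+r+2),
      cif (qfun m1 m2 r (k:ℕ)) (DD n n1 m1 m2 r d0 d1 d2 x k) (DD n n1 m1 m2 r d0 d1 d2 x k))
      = ∏ _k : Fin (m1+m2+r+2), (3/2:ℝ) from
    Finset.prod_congr rfl fun k _ => cif_self _ _,
    Finset.prod_const, Finset.card_univ, Fintype.card_fin]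

lemma blockcol_balance (hev : Even n1) :
    ∀ v < 2, 2 * ((univ.filter fun i : Fin n1 =>
      (if (i:ℕ) < n1/2 then 0 else 1) = v)).card = n1 := by
  obtain ⟨t, ht⟩ := hev
  intro v hv
  interval_cases v
  · have : (univ.filter fun i : Fin n1 => (if (i:ℕ) < n1/2 then 0 else 1) = 0)
        = univ.filter fun i : Fin n1 => (i:ℕ) < n1/2 := by
      refine Finset.filter_congr fun i _ => ?_
      by_cases h : (i:ℕ) < n1/2 <;> simp [h]
    rw [this, card_filter_coe_lt n1 (n1/2) (Nat.div_le_self _ _)]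
    omega
  · have : (univ.filter fun i : Fin n1 => (if (i:ℕ) < n1/2 then 0 else 1) = 1)
        = univ.filter fun i : Fin n1 => ¬ (i:ℕ) < n1/2 := by
      refine Finset.filter_congr fun i _ => ?_
      by_cases h : (i:ℕ) < n1/2 <;> simp [h]
    rw [this]
    have h2 := Finset.card_filter_add_card_filter_not
      (s := (univ : Finset (Fin n1))) (p := fun i => (i:ℕ) < n1/2)
    rw [Finset.card_univ, Fintype.card_fin, card_filter_coe_lt n1 (n1/2) (Nat.div_le_self _ _)] at h2
    omega

end Aux3
section Aux4
open Finset

lemma weight_pull {α β : Type*} [Fintype α] [Fintype β] (w : ℝ) (P : α → β → Prop)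
    [∀ i j, Decidable (P i j)] :
    ∑ i : α, ∑ j : β, (if P i j then w else 0)
      = w * ∑ i : α, ∑ j : β, (if P i j then (1:ℝ) else 0) := by
  rw [Finset.mul_sum]
  refine Finset.sum_congr rfl fun i _ => ?_
  rw [Finset.mul_sum]
  exact Finset.sum_congr rfl fun j _ => (mul_boole _ _).symm

variable (n n1 m1 m2 r : ℕ) (d0 : Fin n → Fin (m1 + m2) → ℕ)
  (d1 : Fin n1 → Fin (m1 + m2) → ℕ) (d2 : Fin n1 → Fin r → ℕ)

lemma Hsquare (hev : Even n1) (hd1 : IsUType n1 m1 m2 d1) (hd2 : IsBalanced n1 r d2) :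
    ∑ i : Fin n1, ∑ j : Fin n1, ∑ k : Fin (m1+m2+r+2),
        (if DD n n1 m1 m2 r d0 d1 d2 (Fin.natAdd n i) k
            = DD n n1 m1 m2 r d0 d1 d2 (Fin.natAdd n j) k
          then gLog (qfun m1 m2 r (k:ℕ)) else 0)
      = aa * ((m1:ℝ) * ((n1:ℝ)*n1/2) + (n1:ℝ)*n1 + (n1:ℝ)*n1/2)
        + bb * ((m2:ℝ) * ((n1:ℝ)*n1/3) + (r:ℝ) * ((n1:ℝ)*n1/2)) := by
  have c1 : ∀ k : Fin (m1+m2),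
      (∑ i : Fin n1, ∑ j : Fin n1,
        if DD n n1 m1 m2 r d0 d1 d2 (Fin.natAdd n i) (Fin.castAdd (r+2) k)
            = DD n n1 m1 m2 r d0 d1 d2 (Fin.natAdd n j) (Fin.castAdd (r+2) k)
          then gLog (qfun m1 m2 r ((Fin.castAdd (r+2) k : ℕ))) else 0)
      = if (k:ℕ) < m1 then aa * ((n1:ℝ)*n1/2) else bb * ((n1:ℝ)*n1/3) := by
    intro k
    have hk : ((Fin.castAdd (r+2) k : ℕ)) < m1+m2 := k.isLt
    have e : ∀ i : Fin n1,
        DD n n1 m1 m2 r d0 d1 d2 (Fin.natAdd n i) (Fin.castAdd (r+2) k) = d1 i k := by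
      intro i
      rw [DD_fu_lo n n1 m1 m2 r d0 d1 d2 i _ hk]
      simp only [Fin.coe_castAdd, Fin.eta]
    simp only [e, Fin.coe_castAdd]
    rw [weight_pull (gLog (qfun m1 m2 r (k:ℕ))) (fun i j => d1 i k = d1 j k)]
    have h := hd1 k
    rw [gLog_lo m1 m2 r _ (show (k:ℕ) < m1+m2 from k.isLt)]
    by_cases h1 : (k:ℕ) < m1
    · rw [if_pos h1] at h ⊢
      rw [if_pos h1, E_two (fun i => d1 i k) (fun j => d1 j k) h.1 h.2 h.2]
    · rw [if_neg h1] at h ⊢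
      rw [if_neg h1, E_three (fun i => d1 i k) (fun j => d1 j k) h.1 h.2 h.2]
  have c2 : ∀ k : Fin r,
      (∑ i : Fin n1, ∑ j : Fin n1,
        if DD n n1 m1 m2 r d0 d1 d2 (Fin.natAdd n i) (Fin.natAdd (m1+m2) (Fin.castAdd 2 k))
            = DD n n1 m1 m2 r d0 d1 d2 (Fin.natAdd n j) (Fin.natAdd (m1+m2) (Fin.castAdd 2 k))
          then gLog (qfun m1 m2 r ((Fin.natAdd (m1+m2) (Fin.castAdd 2 k) : ℕ))) else 0)
      = bb * ((n1:ℝ)*n1/2) := by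
    intro k
    have hco : ((Fin.natAdd (m1+m2) (Fin.castAdd 2 k) : ℕ)) = m1+m2+(k:ℕ) := rfl
    have e : ∀ i : Fin n1,
        DD n n1 m1 m2 r d0 d1 d2 (Fin.natAdd n i) (Fin.natAdd (m1+m2) (Fin.castAdd 2 k))
          = d2 i k := by
      intro i
      rw [DD_fu_mid n n1 m1 m2 r d0 d1 d2 i _ (by omega) (by have := k.isLt; omega)]
      simp only [Fin.coe_natAdd, Fin.coe_castAdd, Nat.add_sub_cancel_left, Fin.eta]
    simp only [e]
    rw [weight_pull _ (fun i j => d2 i k = d2 j k)]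
    rw [E_d2sq (fun i => d2 i k) (fun i => hd2.1 i k) (hd2.2 k).1 (hd2.2 k).2]
    rw [hco, qfun_mid m1 m2 r _ (by omega) (by have := k.isLt; omega)]
    simp [gLog]
  have cb1 :
      (∑ i : Fin n1, ∑ j : Fin n1,
        if DD n n1 m1 m2 r d0 d1 d2 (Fin.natAdd n i) (Fin.natAdd (m1+m2) (Fin.natAdd r (0 : Fin 2)))
            = DD n n1 m1 m2 r d0 d1 d2 (Fin.natAdd n j) (Fin.natAdd (m1+m2) (Fin.natAdd r (0 : Fin 2)))
          then gLog (qfun m1 m2 r ((Fin.natAdd (m1+m2) (Fin.natAdd r (0 : Fin 2)) : ℕ))) else 0)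
      = aa * ((n1:ℝ)*n1) := by
    have hco : ((Fin.natAdd (m1+m2) (Fin.natAdd r (0 : Fin 2)) : ℕ)) = m1+m2+r := by
      simp [Fin.coe_natAdd]
    have e : ∀ i : Fin n1,
        DD n n1 m1 m2 r d0 d1 d2 (Fin.natAdd n i) (Fin.natAdd (m1+m2) (Fin.natAdd r (0 : Fin 2)))
          = 1 := fun i => DD_fu_b1 n n1 m1 m2 r d0 d1 d2 i _ hco
    simp only [e, if_pos rfl]
    rw [hco, qfun_hi m1 m2 r _ (by omega)]
    simp only [Finset.sum_const, Finset.card_univ, Fintype.card_fin, nsmul_eq_mul]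
    simp [gLog]; ring
  have cb2 :
      (∑ i : Fin n1, ∑ j : Fin n1,
        if DD n n1 m1 m2 r d0 d1 d2 (Fin.natAdd n i) (Fin.natAdd (m1+m2) (Fin.natAdd r (1 : Fin 2)))
            = DD n n1 m1 m2 r d0 d1 d2 (Fin.natAdd n j) (Fin.natAdd (m1+m2) (Fin.natAdd r (1 : Fin 2)))
          then gLog (qfun m1 m2 r ((Fin.natAdd (m1+m2) (Fin.natAdd r (1 : Fin 2)) : ℕ))) else 0)
      = aa * ((n1:ℝ)*n1/2) := by
    have hco : ((Fin.natAdd (m1+m2) (Fin.natAdd r (1 : Fin 2)) : ℕ)) = m1+m2+r+1 := by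
      simp [Fin.coe_natAdd]; omega
    have e : ∀ i : Fin n1,
        DD n n1 m1 m2 r d0 d1 d2 (Fin.natAdd n i) (Fin.natAdd (m1+m2) (Fin.natAdd r (1 : Fin 2)))
          = if (i:ℕ) < n1/2 then 0 else 1 :=
      fun i => DD_fu_b2 n n1 m1 m2 r d0 d1 d2 i _ hco
    simp only [e]
    rw [weight_pull _ (fun i j : Fin n1 =>
      (if (i:ℕ) < n1/2 then 0 else 1) = (if (j:ℕ) < n1/2 then 0 else 1))]
    rw [E_two (fun i : Fin n1 => if (i:ℕ) < n1/2 then 0 else 1)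
      (fun j : Fin n1 => if (j:ℕ) < n1/2 then 0 else 1)
      (fun i => by split <;> omega) (blockcol_balance n1 hev) (blockcol_balance n1 hev)]
    rw [hco, qfun_hi m1 m2 r _ (by omega)]
    simp [gLog]
  calc ∑ i : Fin n1, ∑ j : Fin n1, ∑ k : Fin (m1+m2+r+2),
        (if DD n n1 m1 m2 r d0 d1 d2 (Fin.natAdd n i) k
            = DD n n1 m1 m2 r d0 d1 d2 (Fin.natAdd n j) k
          then gLog (qfun m1 m2 r (k:ℕ)) else 0)
      = ∑ i : Fin n1, ∑ k : Fin (m1+m2+r+2), ∑ j : Fin n1,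
        (if DD n n1 m1 m2 r d0 d1 d2 (Fin.natAdd n i) k
            = DD n n1 m1 m2 r d0 d1 d2 (Fin.natAdd n j) k
          then gLog (qfun m1 m2 r (k:ℕ)) else 0) :=
        Finset.sum_congr rfl fun i _ => by rw [Finset.sum_comm]
    _ = ∑ k : Fin (m1+m2+r+2), ∑ i : Fin n1, ∑ j : Fin n1,
        (if DD n n1 m1 m2 r d0 d1 d2 (Fin.natAdd n i) k
            = DD n n1 m1 m2 r d0 d1 d2 (Fin.natAdd n j) k
          then gLog (qfun m1 m2 r (k:ℕ)) else 0) := by rw [Finset.sum_comm]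
    _ = (∑ k : Fin (m1+m2), ∑ i : Fin n1, ∑ j : Fin n1,
        (if DD n n1 m1 m2 r d0 d1 d2 (Fin.natAdd n i) (Fin.castAdd (r+2) k)
            = DD n n1 m1 m2 r d0 d1 d2 (Fin.natAdd n j) (Fin.castAdd (r+2) k)
          then gLog (qfun m1 m2 r ((Fin.castAdd (r+2) k : ℕ))) else 0)) +
        ∑ k : Fin (r+2), ∑ i : Fin n1, ∑ j : Fin n1,
        (if DD n n1 m1 m2 r d0 d1 d2 (Fin.natAdd n i) (Fin.natAdd (m1+m2) k)
            = DD n n1 m1 m2 r d0 d1 d2 (Fin.natAdd n j) (Fin.natAdd (m1+m2) k)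
          then gLog (qfun m1 m2 r ((Fin.natAdd (m1+m2) k : ℕ))) else 0) :=
        Fin.sum_univ_add (f := fun k : Fin ((m1+m2)+(r+2)) => ∑ i : Fin n1, ∑ j : Fin n1,
          (if DD n n1 m1 m2 r d0 d1 d2 (Fin.natAdd n i) k
              = DD n n1 m1 m2 r d0 d1 d2 (Fin.natAdd n j) k
            then gLog (qfun m1 m2 r (k:ℕ)) else 0))
    _ = ((m1:ℝ) * (aa * ((n1:ℝ)*n1/2)) + (m2:ℝ) * (bb * ((n1:ℝ)*n1/3))) +
        ((r:ℝ) * (bb * ((n1:ℝ)*n1/2)) + (aa * ((n1:ℝ)*n1) + aa * ((n1:ℝ)*n1/2))) := by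
        congr 1
        · rw [Finset.sum_congr rfl fun k _ => c1 k]
          exact sum_fin_ite_lt m1 m2 _ _
        · calc (∑ k : Fin (r+2), ∑ i : Fin n1, ∑ j : Fin n1,
              (if DD n n1 m1 m2 r d0 d1 d2 (Fin.natAdd n i) (Fin.natAdd (m1+m2) k)
                  = DD n n1 m1 m2 r d0 d1 d2 (Fin.natAdd n j) (Fin.natAdd (m1+m2) k)
                then gLog (qfun m1 m2 r ((Fin.natAdd (m1+m2) k : ℕ))) else 0))
              = (∑ k : Fin r, ∑ i : Fin n1, ∑ j : Fin n1,
                (if DD n n1 m1 m2 r d0 d1 d2 (Fin.natAdd n i) (Fin.natAdd (m1+m2) (Fin.castAdd 2 k))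
                    = DD n n1 m1 m2 r d0 d1 d2 (Fin.natAdd n j) (Fin.natAdd (m1+m2) (Fin.castAdd 2 k))
                  then gLog (qfun m1 m2 r ((Fin.natAdd (m1+m2) (Fin.castAdd 2 k) : ℕ))) else 0)) +
                ∑ k : Fin 2, ∑ i : Fin n1, ∑ j : Fin n1,
                (if DD n n1 m1 m2 r d0 d1 d2 (Fin.natAdd n i) (Fin.natAdd (m1+m2) (Fin.natAdd r k))
                    = DD n n1 m1 m2 r d0 d1 d2 (Fin.natAdd n j) (Fin.natAdd (m1+m2) (Fin.natAdd r k))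
                  then gLog (qfun m1 m2 r ((Fin.natAdd (m1+m2) (Fin.natAdd r k) : ℕ))) else 0) :=
                Fin.sum_univ_add (f := fun k : Fin (r+2) => ∑ i : Fin n1, ∑ j : Fin n1,
                  (if DD n n1 m1 m2 r d0 d1 d2 (Fin.natAdd n i) (Fin.natAdd (m1+m2) k)
                      = DD n n1 m1 m2 r d0 d1 d2 (Fin.natAdd n j) (Fin.natAdd (m1+m2) k)
                    then gLog (qfun m1 m2 r ((Fin.natAdd (m1+m2) k : ℕ))) else 0))
            _ = (r:ℝ) * (bb * ((n1:ℝ)*n1/2)) + (aa * ((n1:ℝ)*n1) + aa * ((n1:ℝ)*n1/2)) := by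
                congr 1
                · rw [Finset.sum_congr rfl fun k _ => c2 k, Finset.sum_const,
                    Finset.card_univ, Fintype.card_fin, nsmul_eq_mul]
                · rw [Fin.sum_univ_two, cb1, cb2]
    _ = aa * ((m1:ℝ) * ((n1:ℝ)*n1/2) + (n1:ℝ)*n1 + (n1:ℝ)*n1/2)
        + bb * ((m2:ℝ) * ((n1:ℝ)*n1/3) + (r:ℝ) * ((n1:ℝ)*n1/2)) := by ring

end Aux4
section Aux5
open Finset

lemma sum_boole_w {p : ℕ} (P : Fin p → Prop) [DecidablePred P] (w : ℝ) :
    ∑ i : Fin p, (if P i then w else 0) = w * (univ.filter P).card := by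
  rw [← sum_boole_real, Finset.mul_sum]
  exact Finset.sum_congr rfl fun i _ => (mul_boole _ _).symm

variable (n n1 m1 m2 r : ℕ) (d0 : Fin n → Fin (m1 + m2) → ℕ)
  (d1 : Fin n1 → Fin (m1 + m2) → ℕ) (d2 : Fin n1 → Fin r → ℕ)

lemma Hdiag (x : Fin (n+n1)) :
    (∑ k : Fin (m1+m2+r+2),
      if DD n n1 m1 m2 r d0 d1 d2 x k = DD n n1 m1 m2 r d0 d1 d2 x k
        then gLog (qfun m1 m2 r (k:ℕ)) else 0)
      = (m1:ℝ) * aa + m2 * bb + ((r:ℝ) * bb + 2 * aa) := by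
  rw [show (∑ k : Fin (m1+m2+r+2),
      if DD n n1 m1 m2 r d0 d1 d2 x k = DD n n1 m1 m2 r d0 d1 d2 x k
        then gLog (qfun m1 m2 r (k:ℕ)) else 0)
      = ∑ k : Fin (m1+m2+r+2), gLog (qfun m1 m2 r (k:ℕ)) from
    Finset.sum_congr rfl fun k _ => if_pos rfl]
  exact Wsum m1 m2 r

lemma Hcross (hev : Even n1) (hd0 : IsUType n m1 m2 d0) (hd1 : IsUType n1 m1 m2 d1)
    (hd2v : ∀ i k, d2 i k = 1 ∨ d2 i k = 2) :
    ∑ i : Fin n, ∑ j : Fin n1, ∑ k : Fin (m1+m2+r+2),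
        (if DD n n1 m1 m2 r d0 d1 d2 (Fin.castAdd n1 i) k
            = DD n n1 m1 m2 r d0 d1 d2 (Fin.natAdd n j) k
          then gLog (qfun m1 m2 r (k:ℕ)) else 0)
      = aa * ((m1:ℝ) * ((n:ℝ)*n1/2) + (n:ℝ)*n1/2) + bb * ((m2:ℝ) * ((n:ℝ)*n1/3)) := by
  have c1 : ∀ k : Fin (m1+m2),
      (∑ i : Fin n, ∑ j : Fin n1,
        if DD n n1 m1 m2 r d0 d1 d2 (Fin.castAdd n1 i) (Fin.castAdd (r+2) k)
            = DD n n1 m1 m2 r d0 d1 d2 (Fin.natAdd n j) (Fin.castAdd (r+2) k)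
          then gLog (qfun m1 m2 r ((Fin.castAdd (r+2) k : ℕ))) else 0)
      = if (k:ℕ) < m1 then aa * ((n:ℝ)*n1/2) else bb * ((n:ℝ)*n1/3) := by
    intro k
    have hk : ((Fin.castAdd (r+2) k : ℕ)) < m1+m2 := k.isLt
    have e0 : ∀ i : Fin n,
        DD n n1 m1 m2 r d0 d1 d2 (Fin.castAdd n1 i) (Fin.castAdd (r+2) k) = d0 i k := by
      intro i
      rw [DD_init_lo n n1 m1 m2 r d0 d1 d2 i _ hk]
      simp only [Fin.coe_castAdd, Fin.eta]
    have e1 : ∀ j : Fin n1,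
        DD n n1 m1 m2 r d0 d1 d2 (Fin.natAdd n j) (Fin.castAdd (r+2) k) = d1 j k := by
      intro j
      rw [DD_fu_lo n n1 m1 m2 r d0 d1 d2 j _ hk]
      simp only [Fin.coe_castAdd, Fin.eta]
    simp only [e0, e1, Fin.coe_castAdd]
    rw [weight_pull (gLog (qfun m1 m2 r (k:ℕ))) (fun i j => d0 i k = d1 j k)]
    have h0 := hd0 k
    have h1 := hd1 k
    rw [gLog_lo m1 m2 r _ (show (k:ℕ) < m1+m2 from k.isLt)]
    by_cases hcase : (k:ℕ) < m1
    · rw [if_pos hcase] at h0 h1 ⊢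
      rw [if_pos hcase, E_two (fun i => d0 i k) (fun j => d1 j k) h0.1 h0.2 h1.2]
    · rw [if_neg hcase] at h0 h1 ⊢
      rw [if_neg hcase, E_three (fun i => d0 i k) (fun j => d1 j k) h0.1 h0.2 h1.2]
  have c2 : ∀ k : Fin r,
      (∑ i : Fin n, ∑ j : Fin n1,
        if DD n n1 m1 m2 r d0 d1 d2 (Fin.castAdd n1 i) (Fin.natAdd (m1+m2) (Fin.castAdd 2 k))
            = DD n n1 m1 m2 r d0 d1 d2 (Fin.natAdd n j) (Fin.natAdd (m1+m2) (Fin.castAdd 2 k))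
          then gLog (qfun m1 m2 r ((Fin.natAdd (m1+m2) (Fin.castAdd 2 k) : ℕ))) else 0)
      = 0 := by
    intro k
    have hco : ((Fin.natAdd (m1+m2) (Fin.castAdd 2 k) : ℕ)) = m1+m2+(k:ℕ) := rfl
    refine Finset.sum_eq_zero fun i _ => Finset.sum_eq_zero fun j _ => ?_
    rw [DD_init_hi n n1 m1 m2 r d0 d1 d2 i _ (by omega),
      DD_fu_mid n n1 m1 m2 r d0 d1 d2 j _ (by omega) (by have := k.isLt; omega)]
    refine if_neg fun hcon => ?_
    simp only [Fin.coe_natAdd, Fin.coe_castAdd, Nat.add_sub_cancel_left, Fin.eta] at hcon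
    rcases hd2v j k with h|h <;> omega
  have cb1 :
      (∑ i : Fin n, ∑ j : Fin n1,
        if DD n n1 m1 m2 r d0 d1 d2 (Fin.castAdd n1 i) (Fin.natAdd (m1+m2) (Fin.natAdd r (0 : Fin 2)))
            = DD n n1 m1 m2 r d0 d1 d2 (Fin.natAdd n j) (Fin.natAdd (m1+m2) (Fin.natAdd r (0 : Fin 2)))
          then gLog (qfun m1 m2 r ((Fin.natAdd (m1+m2) (Fin.natAdd r (0 : Fin 2)) : ℕ))) else 0)
      = 0 := by
    have hco : ((Fin.natAdd (m1+m2) (Fin.natAdd r (0 : Fin 2)) : ℕ)) = m1+m2+r := by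
      simp [Fin.coe_natAdd]
    refine Finset.sum_eq_zero fun i _ => Finset.sum_eq_zero fun j _ => ?_
    rw [DD_init_hi n n1 m1 m2 r d0 d1 d2 i _ (by omega),
      DD_fu_b1 n n1 m1 m2 r d0 d1 d2 j _ hco, if_neg (by omega)]
  have cb2 :
      (∑ i : Fin n, ∑ j : Fin n1,
        if DD n n1 m1 m2 r d0 d1 d2 (Fin.castAdd n1 i) (Fin.natAdd (m1+m2) (Fin.natAdd r (1 : Fin 2)))
            = DD n n1 m1 m2 r d0 d1 d2 (Fin.natAdd n j) (Fin.natAdd (m1+m2) (Fin.natAdd r (1 : Fin 2)))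
          then gLog (qfun m1 m2 r ((Fin.natAdd (m1+m2) (Fin.natAdd r (1 : Fin 2)) : ℕ))) else 0)
      = aa * ((n:ℝ)*n1/2) := by
    have hco : ((Fin.natAdd (m1+m2) (Fin.natAdd r (1 : Fin 2)) : ℕ)) = m1+m2+r+1 := by
      simp [Fin.coe_natAdd]; omega
    have e0 : ∀ i : Fin n,
        DD n n1 m1 m2 r d0 d1 d2 (Fin.castAdd n1 i) (Fin.natAdd (m1+m2) (Fin.natAdd r (1 : Fin 2)))
          = 0 := fun i => DD_init_hi n n1 m1 m2 r d0 d1 d2 i _ (by omega)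
    have ej : ∀ j : Fin n1,
        DD n n1 m1 m2 r d0 d1 d2 (Fin.natAdd n j) (Fin.natAdd (m1+m2) (Fin.natAdd r (1 : Fin 2)))
          = if (j:ℕ) < n1/2 then 0 else 1 :=
      fun j => DD_fu_b2 n n1 m1 m2 r d0 d1 d2 j _ hco
    simp only [e0, ej]
    have step : ∀ i : Fin n, (∑ j : Fin n1,
        if (0 : ℕ) = (if (j:ℕ) < n1/2 then 0 else 1)
          then gLog (qfun m1 m2 r ((Fin.natAdd (m1+m2) (Fin.natAdd r (1 : Fin 2)) : ℕ))) else 0)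
        = aa * ((n1:ℝ)/2) := by
      intro i
      rw [show (∑ j : Fin n1,
          if (0 : ℕ) = (if (j:ℕ) < n1/2 then 0 else 1)
            then gLog (qfun m1 m2 r ((Fin.natAdd (m1+m2) (Fin.natAdd r (1 : Fin 2)) : ℕ))) else 0)
          = ∑ j : Fin n1, if ((j:ℕ) < n1/2)
            then gLog (qfun m1 m2 r ((Fin.natAdd (m1+m2) (Fin.natAdd r (1 : Fin 2)) : ℕ))) else 0 from
        Finset.sum_congr rfl fun j _ => by by_cases h : (j:ℕ) < n1/2 <;> simp [h]]
      rw [sum_boole_w, card_filter_coe_lt n1 (n1/2) (Nat.div_le_self _ _), hco,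
        qfun_hi m1 m2 r _ (by omega),
        half_real (show 2 * (n1/2) = n1 by obtain ⟨t,ht⟩ := hev; omega)]
      simp [gLog]
    rw [Finset.sum_congr rfl fun i _ => step i, Finset.sum_const, Finset.card_univ,
      Fintype.card_fin, nsmul_eq_mul]
    ring
  calc ∑ i : Fin n, ∑ j : Fin n1, ∑ k : Fin (m1+m2+r+2),
        (if DD n n1 m1 m2 r d0 d1 d2 (Fin.castAdd n1 i) k
            = DD n n1 m1 m2 r d0 d1 d2 (Fin.natAdd n j) k
          then gLog (qfun m1 m2 r (k:ℕ)) else 0)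
      = ∑ i : Fin n, ∑ k : Fin (m1+m2+r+2), ∑ j : Fin n1,
        (if DD n n1 m1 m2 r d0 d1 d2 (Fin.castAdd n1 i) k
            = DD n n1 m1 m2 r d0 d1 d2 (Fin.natAdd n j) k
          then gLog (qfun m1 m2 r (k:ℕ)) else 0) :=
        Finset.sum_congr rfl fun i _ => by rw [Finset.sum_comm]
    _ = ∑ k : Fin (m1+m2+r+2), ∑ i : Fin n, ∑ j : Fin n1,
        (if DD n n1 m1 m2 r d0 d1 d2 (Fin.castAdd n1 i) k
            = DD n n1 m1 m2 r d0 d1 d2 (Fin.natAdd n j) k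
          then gLog (qfun m1 m2 r (k:ℕ)) else 0) := by rw [Finset.sum_comm]
    _ = (∑ k : Fin (m1+m2), ∑ i : Fin n, ∑ j : Fin n1,
        (if DD n n1 m1 m2 r d0 d1 d2 (Fin.castAdd n1 i) (Fin.castAdd (r+2) k)
            = DD n n1 m1 m2 r d0 d1 d2 (Fin.natAdd n j) (Fin.castAdd (r+2) k)
          then gLog (qfun m1 m2 r ((Fin.castAdd (r+2) k : ℕ))) else 0)) +
        ∑ k : Fin (r+2), ∑ i : Fin n, ∑ j : Fin n1,
        (if DD n n1 m1 m2 r d0 d1 d2 (Fin.castAdd n1 i) (Fin.natAdd (m1+m2) k)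
            = DD n n1 m1 m2 r d0 d1 d2 (Fin.natAdd n j) (Fin.natAdd (m1+m2) k)
          then gLog (qfun m1 m2 r ((Fin.natAdd (m1+m2) k : ℕ))) else 0) :=
        Fin.sum_univ_add (f := fun k : Fin ((m1+m2)+(r+2)) => ∑ i : Fin n, ∑ j : Fin n1,
          (if DD n n1 m1 m2 r d0 d1 d2 (Fin.castAdd n1 i) k
              = DD n n1 m1 m2 r d0 d1 d2 (Fin.natAdd n j) k
            then gLog (qfun m1 m2 r (k:ℕ)) else 0))
    _ = ((m1:ℝ) * (aa * ((n:ℝ)*n1/2)) + (m2:ℝ) * (bb * ((n:ℝ)*n1/3))) +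
        ((0:ℝ) + (0 + aa * ((n:ℝ)*n1/2))) := by
        congr 1
        · rw [Finset.sum_congr rfl fun k _ => c1 k]
          exact sum_fin_ite_lt m1 m2 _ _
        · calc (∑ k : Fin (r+2), ∑ i : Fin n, ∑ j : Fin n1,
              (if DD n n1 m1 m2 r d0 d1 d2 (Fin.castAdd n1 i) (Fin.natAdd (m1+m2) k)
                  = DD n n1 m1 m2 r d0 d1 d2 (Fin.natAdd n j) (Fin.natAdd (m1+m2) k)
                then gLog (qfun m1 m2 r ((Fin.natAdd (m1+m2) k : ℕ))) else 0))
              = (∑ k : Fin r, ∑ i : Fin n, ∑ j : Fin n1,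
                (if DD n n1 m1 m2 r d0 d1 d2 (Fin.castAdd n1 i) (Fin.natAdd (m1+m2) (Fin.castAdd 2 k))
                    = DD n n1 m1 m2 r d0 d1 d2 (Fin.natAdd n j) (Fin.natAdd (m1+m2) (Fin.castAdd 2 k))
                  then gLog (qfun m1 m2 r ((Fin.natAdd (m1+m2) (Fin.castAdd 2 k) : ℕ))) else 0)) +
                ∑ k : Fin 2, ∑ i : Fin n, ∑ j : Fin n1,
                (if DD n n1 m1 m2 r d0 d1 d2 (Fin.castAdd n1 i) (Fin.natAdd (m1+m2) (Fin.natAdd r k))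
                    = DD n n1 m1 m2 r d0 d1 d2 (Fin.natAdd n j) (Fin.natAdd (m1+m2) (Fin.natAdd r k))
                  then gLog (qfun m1 m2 r ((Fin.natAdd (m1+m2) (Fin.natAdd r k) : ℕ))) else 0) :=
                Fin.sum_univ_add (f := fun k : Fin (r+2) => ∑ i : Fin n, ∑ j : Fin n1,
                  (if DD n n1 m1 m2 r d0 d1 d2 (Fin.castAdd n1 i) (Fin.natAdd (m1+m2) k)
                      = DD n n1 m1 m2 r d0 d1 d2 (Fin.natAdd n j) (Fin.natAdd (m1+m2) k)
                    then gLog (qfun m1 m2 r ((Fin.natAdd (m1+m2) k : ℕ))) else 0))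
            _ = (0:ℝ) + (0 + aa * ((n:ℝ)*n1/2)) := by
                congr 1
                · rw [Finset.sum_congr rfl fun k _ => c2 k]
                  simp
                · rw [Fin.sum_univ_two, cb1, cb2]
    _ = aa * ((m1:ℝ) * ((n:ℝ)*n1/2) + (n:ℝ)*n1/2) + bb * ((m2:ℝ) * ((n:ℝ)*n1/3)) := by ring

end Aux5
section Aux6
open Finset

lemma mul_double_sum {α β : Type*} [Fintype α] [Fintype β] (c : ℝ) (f : α → β → ℝ) :
    ∑ i : α, ∑ j : β, c * f i j = c * ∑ i : α, ∑ j : β, f i j := by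
  rw [Finset.mul_sum]
  exact Finset.sum_congr rfl fun i _ => by rw [Finset.mul_sum]

variable (n n1 m1 m2 r : ℕ) (d0 : Fin n → Fin (m1 + m2) → ℕ)
  (d1 : Fin n1 → Fin (m1 + m2) → ℕ) (d2 : Fin n1 → Fin r → ℕ)

/-- `P(x,y)`: the product of `cif`-kernels over columns of the augmented design. -/
def Pfun (x y : Fin (n+n1)) : ℝ :=
  ∏ k : Fin (m1+m2+r+2),
    cif (qfun m1 m2 r (k:ℕ)) (DD n n1 m1 m2 r d0 d1 d2 x k) (DD n n1 m1 m2 r d0 d1 d2 y k)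

lemma Pfun_symm (x y : Fin (n+n1)) :
    Pfun n n1 m1 m2 r d0 d1 d2 x y = Pfun n n1 m1 m2 r d0 d1 d2 y x :=
  Finset.prod_congr rfl fun k _ => cif_symm _ _ _

lemma Pfun_diag (x : Fin (n+n1)) :
    Pfun n n1 m1 m2 r d0 d1 d2 x x = (3/2:ℝ)^(m1+m2+r+2) :=
  BlockDiag n n1 m1 m2 r d0 d1 d2 x

lemma Pfun_init (i j : Fin n) :
    Pfun n n1 m1 m2 r d0 d1 d2 (Fin.castAdd n1 i) (Fin.castAdd n1 j)
      = (3/2:ℝ)^(r+2) * ∏ k : Fin (m1+m2), cif (qfun m1 m2 0 (k:ℕ)) (d0 i k) (d0 j k) :=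
  BlockInit n n1 m1 m2 r d0 d1 d2 i j

lemma Pfun_exp (x y : Fin (n+n1)) :
    Pfun n n1 m1 m2 r d0 d1 d2 x y
      = ((5/4:ℝ)^m1 * (23/18:ℝ)^(m2+r) * (5/4:ℝ)^2) *
        Real.exp (∑ k : Fin (m1+m2+r+2),
          if DD n n1 m1 m2 r d0 d1 d2 x k = DD n n1 m1 m2 r d0 d1 d2 y k
            then gLog (qfun m1 m2 r (k:ℕ)) else 0) :=
  (prod_cif_eq (fun k : Fin (m1+m2+r+2) => qfun m1 m2 r (k:ℕ))
    (fun k => DD n n1 m1 m2 r d0 d1 d2 x k) (fun k => DD n n1 m1 m2 r d0 d1 d2 y k)).trans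
    (by rw [prodC m1 m2 r])

set_option maxHeartbeats 2000000 in
lemma final (hn : 1 ≤ n) (hn1 : 2 ≤ n1) (hev : Even n1)
    (hd0 : IsUType n m1 m2 d0) (hd1 : IsUType n1 m1 m2 d1) (hd2 : IsBalanced n1 r d2) :
    WD (fun k : Fin (m1+m2+r+2) => qfun m1 m2 r (k:ℕ)) (DD n n1 m1 m2 r d0 d1 d2)
      ≥ LBW3B n n1 m1 m2 r (WD (fun k : Fin (m1+m2) => qfun m1 m2 0 (k:ℕ)) d0) := by
  classical
  have hq23 := qfun_23 m1 m2 r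
  have hDlt := D_lt n n1 m1 m2 r d0 d1 d2 hd0 hd1 hd2.1
  have hnR : (0:ℝ) < (n:ℝ) := by exact_mod_cast Nat.lt_of_lt_of_le Nat.zero_lt_one hn
  have hn1R : (2:ℝ) ≤ (n1:ℝ) := by exact_mod_cast hn1
  set W0 := WD (fun k : Fin (m1+m2) => qfun m1 m2 0 (k:ℕ)) d0 with hW0
  set e1 := Real.exp (phi1B n1 m1 m2 r) with he1
  set e2 := Real.exp (phi2B m1 m2) with he2
  set Cc := ((5:ℝ)/4)^m1 * ((23:ℝ)/18)^(m2+r) * ((5:ℝ)/4)^2 with hCc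
  have hCc0 : 0 ≤ Cc := by rw [hCc]; positivity
  have hWD : WD (fun k : Fin (m1+m2+r+2) => qfun m1 m2 r (k:ℕ)) (DD n n1 m1 m2 r d0 d1 d2)
      = -((4:ℝ)/3)^(m1+m2+r+2) + (1/((n+n1:ℕ):ℝ)^2) *
        ∑ i : Fin (n+n1), ∑ j : Fin (n+n1), Pfun n n1 m1 m2 r d0 d1 d2 i j := by
    unfold WD
    congr 2
    refine Finset.sum_congr rfl fun i _ => Finset.sum_congr rfl fun j _ => ?_
    exact Finset.prod_congr rfl fun k _ =>
      kernel_eq _ _ _ (hq23 (k:ℕ)) (hDlt i k) (hDlt j k)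
  have hd0lt : ∀ (i : Fin n) (k : Fin (m1+m2)), d0 i k < qfun m1 m2 0 (k:ℕ) := by
    intro i k
    have h := hd0 k
    rw [qfun_lo m1 m2 0 (k:ℕ) k.isLt]
    by_cases h1 : (k:ℕ) < m1
    · rw [if_pos h1] at h ⊢; exact h.1 i
    · rw [if_neg h1] at h ⊢; exact h.1 i
  have hW0eq : W0 = -((4:ℝ)/3)^(m1+m2) + (1/(n:ℝ)^2) *
      ∑ i : Fin n, ∑ j : Fin n, ∏ k : Fin (m1+m2), cif (qfun m1 m2 0 (k:ℕ)) (d0 i k) (d0 j k) := by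
    rw [hW0]
    unfold WD
    congr 2
    refine Finset.sum_congr rfl fun i _ => Finset.sum_congr rfl fun j _ => ?_
    exact Finset.prod_congr rfl fun k _ =>
      kernel_eq _ _ _ (qfun_23 m1 m2 0 (k:ℕ)) (hd0lt i k) (hd0lt j k)
  have hW0sum : (∑ i : Fin n, ∑ j : Fin n, ∏ k : Fin (m1+m2),
        cif (qfun m1 m2 0 (k:ℕ)) (d0 i k) (d0 j k))
      = (n:ℝ)^2 * (W0 + ((4:ℝ)/3)^(m1+m2)) := by
    rw [hW0eq]
    have hne : (n:ℝ)^2 ≠ 0 := by positivity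
    field_simp
    ring
  have hsplit : (∑ i : Fin (n+n1), ∑ j : Fin (n+n1), Pfun n n1 m1 m2 r d0 d1 d2 i j)
      = ((∑ i : Fin n, ∑ j : Fin n, Pfun n n1 m1 m2 r d0 d1 d2 (Fin.castAdd n1 i) (Fin.castAdd n1 j))
        + ∑ i : Fin n, ∑ j : Fin n1, Pfun n n1 m1 m2 r d0 d1 d2 (Fin.castAdd n1 i) (Fin.natAdd n j))
        + ((∑ i : Fin n1, ∑ j : Fin n, Pfun n n1 m1 m2 r d0 d1 d2 (Fin.natAdd n i) (Fin.castAdd n1 j))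
        + ∑ i : Fin n1, ∑ j : Fin n1, Pfun n n1 m1 m2 r d0 d1 d2 (Fin.natAdd n i) (Fin.natAdd n j)) := by
    calc (∑ i : Fin (n+n1), ∑ j : Fin (n+n1), Pfun n n1 m1 m2 r d0 d1 d2 i j)
        = (∑ i : Fin n, ∑ j : Fin (n+n1), Pfun n n1 m1 m2 r d0 d1 d2 (Fin.castAdd n1 i) j)
          + ∑ i : Fin n1, ∑ j : Fin (n+n1), Pfun n n1 m1 m2 r d0 d1 d2 (Fin.natAdd n i) j :=
        Fin.sum_univ_add (f := fun i : Fin (n+n1) => ∑ j, Pfun n n1 m1 m2 r d0 d1 d2 i j)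
      _ = _ := by
        congr 1
        · rw [← Finset.sum_add_distrib]
          exact Finset.sum_congr rfl fun i _ =>
            Fin.sum_univ_add (f := fun j : Fin (n+n1) => Pfun n n1 m1 m2 r d0 d1 d2 (Fin.castAdd n1 i) j)
        · rw [← Finset.sum_add_distrib]
          exact Finset.sum_congr rfl fun i _ =>
            Fin.sum_univ_add (f := fun j : Fin (n+n1) => Pfun n n1 m1 m2 r d0 d1 d2 (Fin.natAdd n i) j)
  have hB00 : (∑ i : Fin n, ∑ j : Fin n,
        Pfun n n1 m1 m2 r d0 d1 d2 (Fin.castAdd n1 i) (Fin.castAdd n1 j))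
      = (3/2:ℝ)^(r+2) * ((n:ℝ)^2 * (W0 + ((4:ℝ)/3)^(m1+m2))) := by
    rw [show (∑ i : Fin n, ∑ j : Fin n,
        Pfun n n1 m1 m2 r d0 d1 d2 (Fin.castAdd n1 i) (Fin.castAdd n1 j))
        = ∑ i : Fin n, ∑ j : Fin n, (3/2:ℝ)^(r+2) *
          ∏ k : Fin (m1+m2), cif (qfun m1 m2 0 (k:ℕ)) (d0 i k) (d0 j k) from
      Finset.sum_congr rfl fun i _ => Finset.sum_congr rfl fun j _ =>
        Pfun_init n n1 m1 m2 r d0 d1 d2 i j]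
    rw [mul_double_sum, hW0sum]
  -- cross block bound
  have hcross_ne : ((univ : Finset (Fin n × Fin n1))).Nonempty :=
    ⟨(⟨0, by omega⟩, ⟨0, by omega⟩), Finset.mem_univ _⟩
  have hcard2 : (((univ : Finset (Fin n × Fin n1))).card : ℝ) = (n:ℝ) * n1 := by
    simp [Finset.card_univ]
  have hsum2 : (∑ p ∈ (univ : Finset (Fin n × Fin n1)), ∑ k : Fin (m1+m2+r+2),
        (if DD n n1 m1 m2 r d0 d1 d2 (Fin.castAdd n1 p.1) k
            = DD n n1 m1 m2 r d0 d1 d2 (Fin.natAdd n p.2) k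
          then gLog (qfun m1 m2 r (k:ℕ)) else 0))
      = aa * ((m1:ℝ) * ((n:ℝ)*n1/2) + (n:ℝ)*n1/2) + bb * ((m2:ℝ) * ((n:ℝ)*n1/3)) := by
    rw [← Finset.univ_product_univ, Finset.sum_product]
    exact Hcross n n1 m1 m2 r d0 d1 d2 hev hd0 hd1 hd2.1
  have harg2 : (aa * ((m1:ℝ) * ((n:ℝ)*n1/2) + (n:ℝ)*n1/2) + bb * ((m2:ℝ) * ((n:ℝ)*n1/3)))
      / ((n:ℝ) * n1) = phi2B m1 m2 := by
    have h1 : (n:ℝ) * n1 ≠ 0 := by positivity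
    unfold phi2B
    field_simp
  have hJ2 : Cc * (((n:ℝ) * n1) * e2)
      ≤ ∑ i : Fin n, ∑ j : Fin n1,
          Pfun n n1 m1 m2 r d0 d1 d2 (Fin.castAdd n1 i) (Fin.natAdd n j) := by
    rw [show (∑ i : Fin n, ∑ j : Fin n1,
          Pfun n n1 m1 m2 r d0 d1 d2 (Fin.castAdd n1 i) (Fin.natAdd n j))
        = ∑ i : Fin n, ∑ j : Fin n1, Cc * Real.exp (∑ k : Fin (m1+m2+r+2),
            if DD n n1 m1 m2 r d0 d1 d2 (Fin.castAdd n1 i) k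
                = DD n n1 m1 m2 r d0 d1 d2 (Fin.natAdd n j) k
              then gLog (qfun m1 m2 r (k:ℕ)) else 0) from
      Finset.sum_congr rfl fun i _ => Finset.sum_congr rfl fun j _ =>
        (Pfun_exp n n1 m1 m2 r d0 d1 d2 _ _).trans (by rw [hCc])]
    rw [mul_double_sum]
    refine mul_le_mul_of_nonneg_left ?_ hCc0
    calc ((n:ℝ) * n1) * e2
        = (((univ : Finset (Fin n × Fin n1))).card : ℝ) *
          Real.exp ((∑ p ∈ (univ : Finset (Fin n × Fin n1)), ∑ k : Fin (m1+m2+r+2),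
            (if DD n n1 m1 m2 r d0 d1 d2 (Fin.castAdd n1 p.1) k
                = DD n n1 m1 m2 r d0 d1 d2 (Fin.natAdd n p.2) k
              then gLog (qfun m1 m2 r (k:ℕ)) else 0)) /
            (((univ : Finset (Fin n × Fin n1))).card : ℝ)) := by
          rw [hcard2, hsum2, harg2, he2]
      _ ≤ ∑ p ∈ (univ : Finset (Fin n × Fin n1)), Real.exp (∑ k : Fin (m1+m2+r+2),
            (if DD n n1 m1 m2 r d0 d1 d2 (Fin.castAdd n1 p.1) k
                = DD n n1 m1 m2 r d0 d1 d2 (Fin.natAdd n p.2) k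
              then gLog (qfun m1 m2 r (k:ℕ)) else 0)) :=
          jensen' _ hcross_ne _
      _ = ∑ i : Fin n, ∑ j : Fin n1, Real.exp (∑ k : Fin (m1+m2+r+2),
            (if DD n n1 m1 m2 r d0 d1 d2 (Fin.castAdd n1 i) k
                = DD n n1 m1 m2 r d0 d1 d2 (Fin.natAdd n j) k
              then gLog (qfun m1 m2 r (k:ℕ)) else 0)) := by
          rw [← Finset.univ_product_univ, Finset.sum_product]
  have hB10 : (∑ i : Fin n1, ∑ j : Fin n,
        Pfun n n1 m1 m2 r d0 d1 d2 (Fin.natAdd n i) (Fin.castAdd n1 j))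
      = ∑ i : Fin n, ∑ j : Fin n1,
        Pfun n n1 m1 m2 r d0 d1 d2 (Fin.castAdd n1 i) (Fin.natAdd n j) := by
    rw [Finset.sum_comm]
    exact Finset.sum_congr rfl fun j _ => Finset.sum_congr rfl fun i _ =>
      Pfun_symm n n1 m1 m2 r d0 d1 d2 _ _
  -- follow-up block bound
  have hod_ne : ((univ : Finset (Fin n1)).offDiag).Nonempty :=
    ⟨(⟨0, by omega⟩, ⟨1, by omega⟩), by
      rw [Finset.mem_offDiag]
      exact ⟨Finset.mem_univ _, Finset.mem_univ _, by simp [Fin.ext_iff]⟩⟩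
  have hodcard : ((((univ : Finset (Fin n1)).offDiag).card : ℕ) : ℝ) = (n1:ℝ)*n1 - n1 := by
    rw [Finset.offDiag_card, Finset.card_univ, Fintype.card_fin,
      Nat.cast_sub (Nat.le_mul_of_pos_left n1 (by omega))]
    push_cast
    ring
  have hsum_sq : (∑ p ∈ (univ : Finset (Fin n1)) ×ˢ (univ : Finset (Fin n1)),
        ∑ k : Fin (m1+m2+r+2),
        (if DD n n1 m1 m2 r d0 d1 d2 (Fin.natAdd n p.1) k
            = DD n n1 m1 m2 r d0 d1 d2 (Fin.natAdd n p.2) k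
          then gLog (qfun m1 m2 r (k:ℕ)) else 0))
      = aa * ((m1:ℝ) * ((n1:ℝ)*n1/2) + (n1:ℝ)*n1 + (n1:ℝ)*n1/2)
        + bb * ((m2:ℝ) * ((n1:ℝ)*n1/3) + (r:ℝ) * ((n1:ℝ)*n1/2)) := by
    rw [Finset.sum_product]
    exact Hsquare n n1 m1 m2 r d0 d1 d2 hev hd1 hd2
  have hsum_diag : (∑ p ∈ (univ : Finset (Fin n1)).diag,
        ∑ k : Fin (m1+m2+r+2),
        (if DD n n1 m1 m2 r d0 d1 d2 (Fin.natAdd n p.1) k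
            = DD n n1 m1 m2 r d0 d1 d2 (Fin.natAdd n p.2) k
          then gLog (qfun m1 m2 r (k:ℕ)) else 0))
      = (n1:ℝ) * ((m1:ℝ) * aa + m2 * bb + ((r:ℝ) * bb + 2 * aa)) := by
    rw [Finset.sum_diag]
    rw [show (∑ i ∈ (univ : Finset (Fin n1)), ∑ k : Fin (m1+m2+r+2),
        (if DD n n1 m1 m2 r d0 d1 d2 (Fin.natAdd n i) k
            = DD n n1 m1 m2 r d0 d1 d2 (Fin.natAdd n i) k
          then gLog (qfun m1 m2 r (k:ℕ)) else 0))
        = ∑ _i ∈ (univ : Finset (Fin n1)),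
            ((m1:ℝ) * aa + m2 * bb + ((r:ℝ) * bb + 2 * aa)) from
      Finset.sum_congr rfl fun i _ => Hdiag n n1 m1 m2 r d0 d1 d2 _]
    rw [Finset.sum_const, Finset.card_univ, Fintype.card_fin, nsmul_eq_mul]
  have hsum_off : (∑ p ∈ (univ : Finset (Fin n1)).offDiag,
        ∑ k : Fin (m1+m2+r+2),
        (if DD n n1 m1 m2 r d0 d1 d2 (Fin.natAdd n p.1) k
            = DD n n1 m1 m2 r d0 d1 d2 (Fin.natAdd n p.2) k
          then gLog (qfun m1 m2 r (k:ℕ)) else 0))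
      = (aa * ((m1:ℝ) * ((n1:ℝ)*n1/2) + (n1:ℝ)*n1 + (n1:ℝ)*n1/2)
        + bb * ((m2:ℝ) * ((n1:ℝ)*n1/3) + (r:ℝ) * ((n1:ℝ)*n1/2)))
        - (n1:ℝ) * ((m1:ℝ) * aa + m2 * bb + ((r:ℝ) * bb + 2 * aa)) := by
    have hu := Finset.sum_union (s₁ := (univ : Finset (Fin n1)).diag)
      (s₂ := (univ : Finset (Fin n1)).offDiag)
      (Finset.disjoint_diag_offDiag (univ : Finset (Fin n1)))
      (f := fun p : Fin n1 × Fin n1 => ∑ k : Fin (m1+m2+r+2),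
        (if DD n n1 m1 m2 r d0 d1 d2 (Fin.natAdd n p.1) k
            = DD n n1 m1 m2 r d0 d1 d2 (Fin.natAdd n p.2) k
          then gLog (qfun m1 m2 r (k:ℕ)) else 0))
    rw [Finset.diag_union_offDiag, hsum_sq, hsum_diag] at hu
    linarith
  have harg1 : ((aa * ((m1:ℝ) * ((n1:ℝ)*n1/2) + (n1:ℝ)*n1 + (n1:ℝ)*n1/2)
        + bb * ((m2:ℝ) * ((n1:ℝ)*n1/3) + (r:ℝ) * ((n1:ℝ)*n1/2)))
        - (n1:ℝ) * ((m1:ℝ) * aa + m2 * bb + ((r:ℝ) * bb + 2 * aa)))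
        / ((n1:ℝ)*n1 - n1) = aa + phi1B n1 m1 m2 r := by
    have hx1 : (n1:ℝ) - 1 ≠ 0 := by intro h; linarith
    have hx0 : (n1:ℝ) ≠ 0 := by intro h; linarith
    have hxx : (n1:ℝ)*n1 - n1 ≠ 0 := by
      have hrw : (n1:ℝ)*n1 - n1 = n1*((n1:ℝ)-1) := by ring
      rw [hrw]
      exact mul_ne_zero hx0 hx1
    unfold phi1B
    field_simp
    ring
  have hB11off : Cc * (((n1:ℝ)*n1 - n1) * ((6:ℝ)/5 * e1))
      ≤ ∑ p ∈ (univ : Finset (Fin n1)).offDiag,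
          Pfun n n1 m1 m2 r d0 d1 d2 (Fin.natAdd n p.1) (Fin.natAdd n p.2) := by
    rw [show (∑ p ∈ (univ : Finset (Fin n1)).offDiag,
          Pfun n n1 m1 m2 r d0 d1 d2 (Fin.natAdd n p.1) (Fin.natAdd n p.2))
        = ∑ p ∈ (univ : Finset (Fin n1)).offDiag, Cc * Real.exp (∑ k : Fin (m1+m2+r+2),
            if DD n n1 m1 m2 r d0 d1 d2 (Fin.natAdd n p.1) k
                = DD n n1 m1 m2 r d0 d1 d2 (Fin.natAdd n p.2) k
              then gLog (qfun m1 m2 r (k:ℕ)) else 0) from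
      Finset.sum_congr rfl fun p _ =>
        (Pfun_exp n n1 m1 m2 r d0 d1 d2 _ _).trans (by rw [hCc]), ← Finset.mul_sum]
    refine mul_le_mul_of_nonneg_left ?_ hCc0
    calc ((n1:ℝ)*n1 - n1) * ((6:ℝ)/5 * e1)
        = ((((univ : Finset (Fin n1)).offDiag).card : ℕ) : ℝ) *
          Real.exp ((∑ p ∈ (univ : Finset (Fin n1)).offDiag, ∑ k : Fin (m1+m2+r+2),
            (if DD n n1 m1 m2 r d0 d1 d2 (Fin.natAdd n p.1) k
                = DD n n1 m1 m2 r d0 d1 d2 (Fin.natAdd n p.2) k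
              then gLog (qfun m1 m2 r (k:ℕ)) else 0)) /
            ((((univ : Finset (Fin n1)).offDiag).card : ℕ) : ℝ)) := by
          rw [hodcard, hsum_off, harg1, Real.exp_add, exp_aa, he1]
      _ ≤ _ := jensen' _ hod_ne _
  have hB11 : (n1:ℝ) * (3/2:ℝ)^(m1+m2+r+2) + Cc * (((n1:ℝ)*n1 - n1) * ((6:ℝ)/5 * e1))
      ≤ ∑ i : Fin n1, ∑ j : Fin n1,
          Pfun n n1 m1 m2 r d0 d1 d2 (Fin.natAdd n i) (Fin.natAdd n j) := by
    have hsp : (∑ i : Fin n1, ∑ j : Fin n1,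
          Pfun n n1 m1 m2 r d0 d1 d2 (Fin.natAdd n i) (Fin.natAdd n j))
        = (∑ p ∈ (univ : Finset (Fin n1)).diag,
            Pfun n n1 m1 m2 r d0 d1 d2 (Fin.natAdd n p.1) (Fin.natAdd n p.2))
          + ∑ p ∈ (univ : Finset (Fin n1)).offDiag,
            Pfun n n1 m1 m2 r d0 d1 d2 (Fin.natAdd n p.1) (Fin.natAdd n p.2) := by
      rw [← Finset.sum_union (Finset.disjoint_diag_offDiag (univ : Finset (Fin n1))),
        Finset.diag_union_offDiag, Finset.sum_product'
          (f := fun i j => Pfun n n1 m1 m2 r d0 d1 d2 (Fin.natAdd n i) (Fin.natAdd n j))]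
    have hdiagv : (∑ p ∈ (univ : Finset (Fin n1)).diag,
          Pfun n n1 m1 m2 r d0 d1 d2 (Fin.natAdd n p.1) (Fin.natAdd n p.2))
        = (n1:ℝ) * (3/2:ℝ)^(m1+m2+r+2) := by
      rw [Finset.sum_diag]
      rw [show (∑ i ∈ (univ : Finset (Fin n1)),
          Pfun n n1 m1 m2 r d0 d1 d2 (Fin.natAdd n i) (Fin.natAdd n i))
          = ∑ _i ∈ (univ : Finset (Fin n1)), (3/2:ℝ)^(m1+m2+r+2) from
        Finset.sum_congr rfl fun i _ => Pfun_diag n n1 m1 m2 r d0 d1 d2 _]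
      rw [Finset.sum_const, Finset.card_univ, Fintype.card_fin, nsmul_eq_mul]
    rw [hsp, hdiagv]
    exact add_le_add le_rfl hB11off
  -- total
  have hStotal : (3/2:ℝ)^(r+2) * ((n:ℝ)^2 * (W0 + ((4:ℝ)/3)^(m1+m2)))
        + Cc * (((n:ℝ) * n1) * e2)
        + (Cc * (((n:ℝ) * n1) * e2)
          + ((n1:ℝ) * (3/2:ℝ)^(m1+m2+r+2) + Cc * (((n1:ℝ)*n1 - n1) * ((6:ℝ)/5 * e1))))
      ≤ ∑ i : Fin (n+n1), ∑ j : Fin (n+n1), Pfun n n1 m1 m2 r d0 d1 d2 i j := by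
    rw [hsplit, hB00]
    exact add_le_add (add_le_add le_rfl hJ2)
      (add_le_add (le_of_le_of_eq hJ2 hB10.symm) hB11)
  have hNpos : (0:ℝ) ≤ 1/((n+n1:ℕ):ℝ)^2 := by positivity
  have hfinal : -((4:ℝ)/3)^(m1+m2+r+2) + (1/((n+n1:ℕ):ℝ)^2) *
        ((3/2:ℝ)^(r+2) * ((n:ℝ)^2 * (W0 + ((4:ℝ)/3)^(m1+m2)))
          + Cc * (((n:ℝ) * n1) * e2)
          + (Cc * (((n:ℝ) * n1) * e2)
            + ((n1:ℝ) * (3/2:ℝ)^(m1+m2+r+2) + Cc * (((n1:ℝ)*n1 - n1) * ((6:ℝ)/5 * e1)))))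
      = LBW3B n n1 m1 m2 r W0 := by
    unfold LBW3B Cconst T1Bc T2Bc
    rw [← he1, ← he2, hCc]
    rw [show m1+m2+r+2 = (m1+m2)+(r+2) from by omega]
    push_cast
    rw [pow_add ((4:ℝ)/3) (m1+m2) (r+2), pow_add ((3:ℝ)/2) (m1+m2) (r+2),
      pow_succ ((5:ℝ)/4) m1]
    ring
  rw [hWD, ← hfinal]
  exact add_le_add le_rfl (mul_le_mul_of_nonneg_left hStotal hNpos)

end Aux6

theorem paper_stmt_6 (n n1 m1 m2 r : ℕ) (hn : 1 ≤ n) (hn1 : 2 ≤ n1)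
    (hev : Even n1) (hm : 1 ≤ m1 + m2)
    (d0 : Fin n → Fin (m1 + m2) → ℕ) (d1 : Fin n1 → Fin (m1 + m2) → ℕ)
    (d2 : Fin n1 → Fin r → ℕ)
    (hd0 : IsUType n m1 m2 d0) (hd1 : IsUType n1 m1 m2 d1) (hd2 : IsBalanced n1 r d2) :
    WD (fun k : Fin (m1 + m2 + r + 2) => qfun m1 m2 r (k : ℕ)) (appendTwo n n1 (m1 + m2 + r) (augDesign n n1 (m1 + m2) r d0 d1 d2)) ≥ LBW3B n n1 m1 m2 r (WD (fun k : Fin (m1 + m2) => qfun m1 m2 0 (k : ℕ)) d0) := by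
  exact final n n1 m1 m2 r d0 d1 d2 hn hn1 hev hd0 hd1 hd2

end CAUD

end
end

section
/- Let n, n1 ≥ 1, m1, m2 ≥ 0 with m1+m2 ≥ 1, r ≥ 0, let d0 ∈ U(n; 2^{m1} 3^{m2}), d1 ∈ U(n1; 2^{m1} 3^{m2}), let d2 be any n1×r matrix with entries in {1,2}, and let D3 be the corresponding column augmented design. Then WD(D3) = C(r) + (n²/(n+n1)²)·(3/2)^r·WD(d0) + (1/(n+n1)²)·(5/4)^{m1}·(23/18)^{m2+r}·( Σ_{i,j follow-up rows, i ≠ j} (6/5)^{F_{ij}}·(27/23)^{V_{ij}+T_{ij}} + 2·Σ_{i initial row, j follow-up row} (6/5)^{F_{ij}}·(27/23)^{V_{ij}} ), where the first sum runs over all ordered pairs of distinct follow-up rows and the second over all pairs with i an initial row and j a follow-up row. -/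
open Finset

noncomputable section

namespace CAUD

/-! ### Auxiliary lemmas -/

theorem my_card_filter_lt (M a : ℕ) (h : a ≤ M) :
    (univ.filter fun k : Fin M => (k : ℕ) < a).card = a := by
  rw [Finset.card_filter, Fin.sum_univ_eq_sum_range (fun i => if i < a then 1 else 0),
    ← Finset.card_filter]
  have : Finset.filter (fun i => i < a) (Finset.range M) = Finset.range a := by
    ext x; simp; omega
  rw [this, Finset.card_range]

theorem my_card_filter_le (M a : ℕ) :
    (univ.filter fun k : Fin M => a ≤ (k : ℕ)).card = M - a := by
  rw [Finset.card_filter, Fin.sum_univ_eq_sum_range (fun i => if a ≤ i then 1 else 0),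
    ← Finset.card_filter]
  have : Finset.filter (fun i => a ≤ i) (Finset.range M) = Finset.Ico a M := by
    ext x; simp; omega
  rw [this, Nat.card_Ico]

theorem my_fact2 (x y : ℕ) (hx : x < 2) (hy : y < 2) :
    (3 : ℝ) / 2 - |uVal 2 x - uVal 2 y| * (1 - |uVal 2 x - uVal 2 y|) =
      if x = y then (3 : ℝ) / 2 else 5 / 4 := by
  interval_cases x <;> interval_cases y <;> norm_num [uVal, abs_of_nonneg, abs_of_nonpos]

theorem my_fact3 (x y : ℕ) (hx : x < 3) (hy : y < 3) :
    (3 : ℝ) / 2 - |uVal 3 x - uVal 3 y| * (1 - |uVal 3 x - uVal 3 y|) =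
      if x = y then (3 : ℝ) / 2 else 23 / 18 := by
  interval_cases x <;> interval_cases y <;> norm_num [uVal, abs_of_nonneg, abs_of_nonpos]

/-- Coincidence number among columns `≥ m1`. -/
def Eco {N M : ℕ} (m1 : ℕ) (D : Fin N → Fin M → ℕ) (i j : Fin N) : ℕ :=
  (univ.filter (fun k : Fin M => m1 ≤ (k : ℕ) ∧ D i k = D j k)).card

theorem my_pow_combine (F E c1 c2 : ℕ) :
    ((3 : ℝ)/2)^F * ((5 : ℝ)/4)^c1 * (((3 : ℝ)/2)^E * ((23 : ℝ)/18)^c2)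
      = (5/4 : ℝ)^(F + c1) * (23/18 : ℝ)^(E + c2) * (6/5 : ℝ)^F * (27/23 : ℝ)^E := by
  have h1 : ((3 : ℝ)/2)^F = ((5 : ℝ)/4)^F * ((6 : ℝ)/5)^F := by rw [← mul_pow]; norm_num
  have h2 : ((3 : ℝ)/2)^E = ((23 : ℝ)/18)^E * ((27 : ℝ)/23)^E := by rw [← mul_pow]; norm_num
  rw [h1, h2, pow_add, pow_add]; ring

theorem my_key {N M m1 R : ℕ} (hM : M = m1 + R) (q : Fin M → ℕ)
    (hq : ∀ k : Fin M, q k = if (k : ℕ) < m1 then 2 else 3)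
    (D : Fin N → Fin M → ℕ) (i j : Fin N)
    (h2 : ∀ k : Fin M, (k : ℕ) < m1 → D i k < 2 ∧ D j k < 2)
    (h3 : ∀ k : Fin M, m1 ≤ (k : ℕ) → D i k < 3 ∧ D j k < 3) :
    (∏ k : Fin M, ((3 : ℝ) / 2 - |uVal (q k) (D i k) - uVal (q k) (D j k)| *
        (1 - |uVal (q k) (D i k) - uVal (q k) (D j k)|)))
      = (5 / 4 : ℝ) ^ m1 * (23 / 18 : ℝ) ^ R * (6 / 5 : ℝ) ^ Fco m1 D i j *
          (27 / 23 : ℝ) ^ Eco m1 D i j := by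
  have hfac : ∀ k : Fin M,
      ((3 : ℝ) / 2 - |uVal (q k) (D i k) - uVal (q k) (D j k)| *
        (1 - |uVal (q k) (D i k) - uVal (q k) (D j k)|)) =
      if (k : ℕ) < m1 then (if D i k = D j k then (3 : ℝ) / 2 else 5 / 4)
      else (if D i k = D j k then (3 : ℝ) / 2 else 23 / 18) := by
    intro k
    by_cases h : (k : ℕ) < m1
    · rw [hq k, if_pos h, if_pos h, my_fact2 _ _ (h2 k h).1 (h2 k h).2]
    · rw [hq k, if_neg h, if_neg h,
        my_fact3 _ _ (h3 k (le_of_not_gt h)).1 (h3 k (le_of_not_gt h)).2]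
  rw [Finset.prod_congr rfl (fun k _ => hfac k),
    ← Finset.prod_filter_mul_prod_filter_not univ (fun k : Fin M => (k : ℕ) < m1)]
  have e1 : ∀ k ∈ univ.filter (fun k : Fin M => (k : ℕ) < m1),
      (if (k : ℕ) < m1 then (if D i k = D j k then (3 : ℝ) / 2 else 5 / 4)
       else (if D i k = D j k then (3 : ℝ) / 2 else 23 / 18))
      = (if D i k = D j k then (3 : ℝ) / 2 else 5 / 4) := by
    intro k hk; rw [if_pos (Finset.mem_filter.mp hk).2]
  have e2 : ∀ k ∈ univ.filter (fun k : Fin M => ¬ (k : ℕ) < m1),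
      (if (k : ℕ) < m1 then (if D i k = D j k then (3 : ℝ) / 2 else 5 / 4)
       else (if D i k = D j k then (3 : ℝ) / 2 else 23 / 18))
      = (if D i k = D j k then (3 : ℝ) / 2 else 23 / 18) := by
    intro k hk; rw [if_neg (Finset.mem_filter.mp hk).2]
  rw [Finset.prod_congr rfl e1, Finset.prod_congr rfl e2,
    Finset.prod_ite, Finset.prod_const, Finset.prod_const,
    Finset.prod_ite, Finset.prod_const, Finset.prod_const,
    Finset.filter_filter, Finset.filter_filter, Finset.filter_filter, Finset.filter_filter]
  have hlow : (univ.filter fun k : Fin M => (k : ℕ) < m1 ∧ D i k = D j k).card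
      = Fco m1 D i j := rfl
  have hnn : (univ.filter fun k : Fin M => ¬ (k : ℕ) < m1 ∧ D i k = D j k)
      = (univ.filter fun k : Fin M => m1 ≤ (k : ℕ) ∧ D i k = D j k) := by
    ext k; simp [not_lt]
  have hhigh : (univ.filter fun k : Fin M => ¬ (k : ℕ) < m1 ∧ D i k = D j k).card
      = Eco m1 D i j := by rw [hnn]; rfl
  have hsumF : Fco m1 D i j
      + (univ.filter fun k : Fin M => (k : ℕ) < m1 ∧ ¬ D i k = D j k).card = m1 := by
    rw [Fco, ← Finset.filter_filter, ← Finset.filter_filter,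
      Finset.card_filter_add_card_filter_not, my_card_filter_lt M m1 (by omega)]
  have hsumE : Eco m1 D i j
      + (univ.filter fun k : Fin M => ¬ (k : ℕ) < m1 ∧ ¬ D i k = D j k).card = R := by
    have h1 : (univ.filter fun k : Fin M => ¬ (k : ℕ) < m1 ∧ ¬ D i k = D j k)
        = ((univ.filter fun k : Fin M => ¬ (k : ℕ) < m1).filter fun k => ¬ D i k = D j k) := by
      rw [Finset.filter_filter]
    have h2 : Eco m1 D i j
        = ((univ.filter fun k : Fin M => ¬ (k : ℕ) < m1).filter fun k => D i k = D j k).card := by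
      rw [Finset.filter_filter, hnn]; rfl
    rw [h1, h2, Finset.card_filter_add_card_filter_not]
    have h3 : (univ.filter fun k : Fin M => ¬ (k : ℕ) < m1)
        = (univ.filter fun k : Fin M => m1 ≤ (k : ℕ)) := by ext k; simp [not_lt]
    rw [h3, my_card_filter_le]; omega
  rw [hlow, hhigh, my_pow_combine, hsumF, hsumE]


section AugLemmas

variable {n n1 m1 m2 r : ℕ} (d0 : Fin n → Fin (m1 + m2) → ℕ)
  (d1 : Fin n1 → Fin (m1 + m2) → ℕ) (d2 : Fin n1 → Fin r → ℕ)

theorem aug_low {i : Fin (n + n1)} {k : Fin (m1 + m2 + r)} (hi : (i : ℕ) < n)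
    (hk : (k : ℕ) < m1 + m2) :
    augDesign n n1 (m1 + m2) r d0 d1 d2 i k = d0 ⟨i, hi⟩ ⟨k, hk⟩ := by
  simp [augDesign, hi, hk]

theorem aug_low' {i : Fin (n + n1)} {k : Fin (m1 + m2 + r)} (hi : ¬ (i : ℕ) < n)
    (hk : (k : ℕ) < m1 + m2) :
    augDesign n n1 (m1 + m2) r d0 d1 d2 i k
      = d1 ⟨(i : ℕ) - n, by have := i.isLt; omega⟩ ⟨k, hk⟩ := by
  simp [augDesign, hi, hk]

theorem aug_high {i : Fin (n + n1)} {k : Fin (m1 + m2 + r)} (hi : (i : ℕ) < n)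
    (hk : ¬ (k : ℕ) < m1 + m2) :
    augDesign n n1 (m1 + m2) r d0 d1 d2 i k = 0 := by
  simp [augDesign, hi, hk]

theorem aug_high' {i : Fin (n + n1)} {k : Fin (m1 + m2 + r)} (hi : ¬ (i : ℕ) < n)
    (hk : ¬ (k : ℕ) < m1 + m2) :
    augDesign n n1 (m1 + m2) r d0 d1 d2 i k
      = d2 ⟨(i : ℕ) - n, by have := i.isLt; omega⟩
           ⟨(k : ℕ) - (m1 + m2), by have := k.isLt; omega⟩ := by
  simp [augDesign, hi, hk]

theorem ut_lt2 {N : ℕ} {d : Fin N → Fin (m1 + m2) → ℕ} (h : IsUType N m1 m2 d)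
    {k : Fin (m1 + m2)} (hk : (k : ℕ) < m1) (i : Fin N) : d i k < 2 := by
  have := h k; rw [if_pos hk] at this; exact this.1 i

theorem ut_lt3 {N : ℕ} {d : Fin N → Fin (m1 + m2) → ℕ} (h : IsUType N m1 m2 d)
    {k : Fin (m1 + m2)} (hk : ¬ (k : ℕ) < m1) (i : Fin N) : d i k < 3 := by
  have := h k; rw [if_neg hk] at this; exact this.1 i

theorem aug_b2 (hd0 : IsUType n m1 m2 d0) (hd1 : IsUType n1 m1 m2 d1)
    (i : Fin (n + n1)) (k : Fin (m1 + m2 + r)) (hk : (k : ℕ) < m1) :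
    augDesign n n1 (m1 + m2) r d0 d1 d2 i k < 2 := by
  by_cases hi : (i : ℕ) < n
  · rw [aug_low d0 d1 d2 hi (by omega)]; exact ut_lt2 hd0 hk _
  · rw [aug_low' d0 d1 d2 hi (by omega)]; exact ut_lt2 hd1 hk _

theorem aug_b3 (hd0 : IsUType n m1 m2 d0) (hd1 : IsUType n1 m1 m2 d1)
    (hd2 : ∀ i k, d2 i k = 1 ∨ d2 i k = 2)
    (i : Fin (n + n1)) (k : Fin (m1 + m2 + r)) (hk : m1 ≤ (k : ℕ)) :
    augDesign n n1 (m1 + m2) r d0 d1 d2 i k < 3 := by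
  by_cases hk2 : (k : ℕ) < m1 + m2
  · by_cases hi : (i : ℕ) < n
    · rw [aug_low d0 d1 d2 hi hk2]; exact ut_lt3 hd0 (by simp; omega) _
    · rw [aug_low' d0 d1 d2 hi hk2]; exact ut_lt3 hd1 (by simp; omega) _
  · by_cases hi : (i : ℕ) < n
    · rw [aug_high d0 d1 d2 hi hk2]; omega
    · rw [aug_high' d0 d1 d2 hi hk2]
      have hb : ∀ a b, d2 a b < 3 := fun a b => by rcases hd2 a b with h | h <;> omega
      exact hb _ _

theorem my_card_cast {m r : ℕ} (Q : Fin (m + r) → Prop) [DecidablePred Q]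
    (P : Fin m → Prop) [DecidablePred P]
    (hQ : ∀ k : Fin (m + r), Q k → (k : ℕ) < m)
    (hiff : ∀ (k : Fin (m + r)) (hk : (k : ℕ) < m), Q k ↔ P ⟨(k : ℕ), hk⟩) :
    (univ.filter Q).card = (univ.filter P).card := by
  apply Finset.card_bij (fun (k : Fin (m + r)) (hk : k ∈ univ.filter Q) =>
    (⟨(k : ℕ), hQ k (Finset.mem_filter.mp hk).2⟩ : Fin m))
  · intro k hk
    simp only [Finset.mem_filter, Finset.mem_univ, true_and] at hk ⊢
    exact (hiff k (hQ k hk)).mp hk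
  · intro a ha b hb hab
    apply Fin.ext
    have : ((⟨(a : ℕ), hQ a (Finset.mem_filter.mp ha).2⟩ : Fin m) : ℕ)
        = ((⟨(b : ℕ), hQ b (Finset.mem_filter.mp hb).2⟩ : Fin m) : ℕ) := by rw [hab]
    simpa using this
  · intro b hb
    simp only [Finset.mem_filter, Finset.mem_univ, true_and] at hb
    refine ⟨Fin.castAdd r b, ?_, ?_⟩
    · simp only [Finset.mem_filter, Finset.mem_univ, true_and]
      exact (hiff (Fin.castAdd r b) (by simp)).mpr (by simpa using hb)
    · apply Fin.ext; simp

end AugLemmas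

theorem Eco_split {N M : ℕ} (m1 m2 : ℕ) (D : Fin N → Fin M → ℕ) (i j : Fin N) :
    Eco m1 D i j = Vco m1 m2 D i j
      + (univ.filter fun k : Fin M => m1 + m2 ≤ (k : ℕ) ∧ D i k = D j k).card := by
  have h := Finset.card_filter_add_card_filter_not
    (s := univ.filter (fun k : Fin M => m1 ≤ (k : ℕ) ∧ D i k = D j k))
    (p := fun k => (k : ℕ) < m1 + m2)
  rw [Finset.filter_filter, Finset.filter_filter] at h
  have e1 : univ.filter (fun k : Fin M => (m1 ≤ (k : ℕ) ∧ D i k = D j k) ∧ (k : ℕ) < m1 + m2)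
      = univ.filter (fun k : Fin M => m1 ≤ (k : ℕ) ∧ (k : ℕ) < m1 + m2 ∧ D i k = D j k) := by
    ext k; simp only [Finset.mem_filter, Finset.mem_univ, true_and]; tauto
  have e2 : univ.filter (fun k : Fin M => (m1 ≤ (k : ℕ) ∧ D i k = D j k) ∧ ¬ (k : ℕ) < m1 + m2)
      = univ.filter (fun k : Fin M => m1 + m2 ≤ (k : ℕ) ∧ D i k = D j k) := by
    ext k; simp only [Finset.mem_filter, Finset.mem_univ, true_and, not_lt]
    constructor
    · rintro ⟨⟨h1, h2⟩, h3⟩; exact ⟨h3, h2⟩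
    · rintro ⟨h1, h2⟩; exact ⟨⟨by omega, h2⟩, h1⟩
  rw [e1, e2] at h
  unfold Eco Vco
  omega

section CaseCounts

variable {n n1 m1 m2 r : ℕ} (d0 : Fin n → Fin (m1 + m2) → ℕ)
  (d1 : Fin n1 → Fin (m1 + m2) → ℕ) (d2 : Fin n1 → Fin r → ℕ)

theorem Fco_init {i j : Fin (n + n1)} (hi : (i : ℕ) < n) (hj : (j : ℕ) < n) :
    Fco m1 (augDesign n n1 (m1 + m2) r d0 d1 d2) i j = Fco m1 d0 ⟨i, hi⟩ ⟨j, hj⟩ := by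
  unfold Fco
  apply my_card_cast
  · intro k hk; exact lt_of_lt_of_le hk.1 (Nat.le_add_right _ _)
  · intro k hk
    constructor
    · rintro ⟨h1, h2⟩
      exact ⟨h1, by rw [← aug_low d0 d1 d2 hi hk, ← aug_low d0 d1 d2 hj hk]; exact h2⟩
    · rintro ⟨h1, h2⟩
      exact ⟨h1, by rw [aug_low d0 d1 d2 hi hk, aug_low d0 d1 d2 hj hk]; exact h2⟩

theorem Vco_init {i j : Fin (n + n1)} (hi : (i : ℕ) < n) (hj : (j : ℕ) < n) :
    Vco m1 m2 (augDesign n n1 (m1 + m2) r d0 d1 d2) i j = Eco m1 d0 ⟨i, hi⟩ ⟨j, hj⟩ := by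
  unfold Vco Eco
  apply my_card_cast
  · intro k hk; exact hk.2.1
  · intro k hk
    constructor
    · rintro ⟨h1, h2, h3⟩
      exact ⟨h1, by rw [← aug_low d0 d1 d2 hi hk, ← aug_low d0 d1 d2 hj hk]; exact h3⟩
    · rintro ⟨h1, h2⟩
      exact ⟨h1, hk, by rw [aug_low d0 d1 d2 hi hk, aug_low d0 d1 d2 hj hk]; exact h2⟩

theorem high_init {i j : Fin (n + n1)} (hi : (i : ℕ) < n) (hj : (j : ℕ) < n) :
    (univ.filter fun k : Fin (m1 + m2 + r) => m1 + m2 ≤ (k : ℕ) ∧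
      augDesign n n1 (m1 + m2) r d0 d1 d2 i k = augDesign n n1 (m1 + m2) r d0 d1 d2 j k).card
      = r := by
  have e : (univ.filter fun k : Fin (m1 + m2 + r) => m1 + m2 ≤ (k : ℕ) ∧
      augDesign n n1 (m1 + m2) r d0 d1 d2 i k = augDesign n n1 (m1 + m2) r d0 d1 d2 j k)
      = univ.filter (fun k : Fin (m1 + m2 + r) => m1 + m2 ≤ (k : ℕ)) := by
    ext k
    simp only [Finset.mem_filter, Finset.mem_univ, true_and, and_iff_left_iff_imp]
    intro hk
    rw [aug_high d0 d1 d2 hi (not_lt.mpr hk), aug_high d0 d1 d2 hj (not_lt.mpr hk)]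
  rw [e, my_card_filter_le]; omega

theorem high_mixed (hd2 : ∀ i k, d2 i k = 1 ∨ d2 i k = 2)
    {i j : Fin (n + n1)} (hi : (i : ℕ) < n) (hj : ¬ (j : ℕ) < n) :
    (univ.filter fun k : Fin (m1 + m2 + r) => m1 + m2 ≤ (k : ℕ) ∧
      augDesign n n1 (m1 + m2) r d0 d1 d2 i k = augDesign n n1 (m1 + m2) r d0 d1 d2 j k).card
      = 0 := by
  rw [Finset.card_eq_zero, Finset.filter_eq_empty_iff]
  intro k _
  rintro ⟨hk, heq⟩
  rw [aug_high d0 d1 d2 hi (not_lt.mpr hk), aug_high' d0 d1 d2 hj (not_lt.mpr hk)] at heq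
  have hb : ∀ a b, d2 a b ≠ 0 := fun a b => by rcases hd2 a b with h | h <;> omega
  exact hb _ _ heq.symm

theorem high_follow (hd2 : ∀ i k, d2 i k = 1 ∨ d2 i k = 2)
    {i j : Fin (n + n1)} (hi : ¬ (i : ℕ) < n) (hj : ¬ (j : ℕ) < n) :
    (univ.filter fun k : Fin (m1 + m2 + r) => m1 + m2 ≤ (k : ℕ) ∧
      augDesign n n1 (m1 + m2) r d0 d1 d2 i k = augDesign n n1 (m1 + m2) r d0 d1 d2 j k).card
      = Tco (m1 + m2) (augDesign n n1 (m1 + m2) r d0 d1 d2) i j := by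
  unfold Tco
  congr 1
  ext k
  simp only [Finset.mem_filter, Finset.mem_univ, true_and]
  constructor
  · rintro ⟨hk, heq⟩
    refine ⟨hk, heq, ?_⟩
    rw [aug_high' d0 d1 d2 hi (not_lt.mpr hk)]
    exact hd2 _ _
  · rintro ⟨hk, heq, -⟩; exact ⟨hk, heq⟩

theorem Eco_init {i j : Fin (n + n1)} (hi : (i : ℕ) < n) (hj : (j : ℕ) < n) :
    Eco m1 (augDesign n n1 (m1 + m2) r d0 d1 d2) i j = Eco m1 d0 ⟨i, hi⟩ ⟨j, hj⟩ + r := by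
  rw [Eco_split m1 m2, Vco_init d0 d1 d2 hi hj, high_init d0 d1 d2 hi hj]

theorem Eco_mixed (hd2 : ∀ i k, d2 i k = 1 ∨ d2 i k = 2)
    {i j : Fin (n + n1)} (hi : (i : ℕ) < n) (hj : ¬ (j : ℕ) < n) :
    Eco m1 (augDesign n n1 (m1 + m2) r d0 d1 d2) i j
      = Vco m1 m2 (augDesign n n1 (m1 + m2) r d0 d1 d2) i j := by
  rw [Eco_split m1 m2, high_mixed d0 d1 d2 hd2 hi hj, add_zero]

theorem Eco_follow (hd2 : ∀ i k, d2 i k = 1 ∨ d2 i k = 2)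
    {i j : Fin (n + n1)} (hi : ¬ (i : ℕ) < n) (hj : ¬ (j : ℕ) < n) :
    Eco m1 (augDesign n n1 (m1 + m2) r d0 d1 d2) i j
      = Vco m1 m2 (augDesign n n1 (m1 + m2) r d0 d1 d2) i j
        + Tco (m1 + m2) (augDesign n n1 (m1 + m2) r d0 d1 d2) i j := by
  rw [Eco_split m1 m2, high_follow d0 d1 d2 hd2 hi hj]

end CaseCounts

theorem my_prod_diag {N M : ℕ} (q : Fin M → ℕ) (D : Fin N → Fin M → ℕ) (i : Fin N) :
    (∏ k : Fin M, ((3 : ℝ) / 2 - |uVal (q k) (D i k) - uVal (q k) (D i k)| *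
        (1 - |uVal (q k) (D i k) - uVal (q k) (D i k)|))) = ((3 : ℝ) / 2) ^ M := by
  have h : ∀ k : Fin M, ((3 : ℝ) / 2 - |uVal (q k) (D i k) - uVal (q k) (D i k)| *
      (1 - |uVal (q k) (D i k) - uVal (q k) (D i k)|)) = (3 : ℝ) / 2 := by
    intro k; simp
  rw [Finset.prod_congr rfl fun k _ => h k, Finset.prod_const]
  simp

theorem my_prod_symm {N M : ℕ} (q : Fin M → ℕ) (D : Fin N → Fin M → ℕ) (i j : Fin N) :
    (∏ k : Fin M, ((3 : ℝ) / 2 - |uVal (q k) (D i k) - uVal (q k) (D j k)| *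
        (1 - |uVal (q k) (D i k) - uVal (q k) (D j k)|)))
    = (∏ k : Fin M, ((3 : ℝ) / 2 - |uVal (q k) (D j k) - uVal (q k) (D i k)| *
        (1 - |uVal (q k) (D j k) - uVal (q k) (D i k)|))) :=
  Finset.prod_congr rfl fun k _ => by rw [abs_sub_comm]

theorem my_sum_if_lt {n n1 : ℕ} (f : Fin (n + n1) → ℝ) :
    (∑ i : Fin (n + n1), if (i : ℕ) < n then f i else 0)
      = ∑ i : Fin n, f (Fin.castAdd n1 i) := by
  rw [Fin.sum_univ_add]
  have h1 : ∀ i : Fin n, (if ((Fin.castAdd n1 i : Fin (n + n1)) : ℕ) < n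
      then f (Fin.castAdd n1 i) else 0) = f (Fin.castAdd n1 i) := fun i => if_pos (by simp)
  have h2 : ∀ i : Fin n1, (if ((Fin.natAdd n i : Fin (n + n1)) : ℕ) < n
      then f (Fin.natAdd n i) else 0) = 0 :=
    fun i => if_neg (by simp only [Fin.coe_natAdd]; omega)
  rw [Finset.sum_congr rfl fun i _ => h1 i, Finset.sum_congr rfl fun i _ => h2 i,
    Finset.sum_const_zero, add_zero]

theorem my_sum_if_ge {n n1 : ℕ} (f : Fin (n + n1) → ℝ) :
    (∑ i : Fin (n + n1), if n ≤ (i : ℕ) then f i else 0)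
      = ∑ i : Fin n1, f (Fin.natAdd n i) := by
  rw [Fin.sum_univ_add]
  have h1 : ∀ i : Fin n, (if n ≤ ((Fin.castAdd n1 i : Fin (n + n1)) : ℕ)
      then f (Fin.castAdd n1 i) else 0) = 0 :=
    fun i => if_neg (by simp only [Fin.coe_castAdd]; have := i.isLt; omega)
  have h2 : ∀ i : Fin n1, (if n ≤ ((Fin.natAdd n i : Fin (n + n1)) : ℕ)
      then f (Fin.natAdd n i) else 0) = f (Fin.natAdd n i) :=
    fun i => if_pos (by simp only [Fin.coe_natAdd]; omega)
  rw [Finset.sum_congr rfl fun i _ => h1 i, Finset.sum_congr rfl fun i _ => h2 i,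
    Finset.sum_const_zero, zero_add]

theorem my_sum_ite_const {α : Type*} (s : Finset α) (p : Prop) [Decidable p] (f : α → ℝ) :
    (∑ x ∈ s, if p then f x else 0) = if p then ∑ x ∈ s, f x else 0 := by
  split_ifs <;> simp

set_option maxHeartbeats 1600000 in
theorem paper_stmt_11 (n n1 m1 m2 r : ℕ) (hn : 1 ≤ n) (hn1 : 1 ≤ n1)
    (hm : 1 ≤ m1 + m2)
    (d0 : Fin n → Fin (m1 + m2) → ℕ) (d1 : Fin n1 → Fin (m1 + m2) → ℕ)
    (d2 : Fin n1 → Fin r → ℕ)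
    (hd0 : IsUType n m1 m2 d0) (hd1 : IsUType n1 m1 m2 d1)
    (hd2 : ∀ i k, d2 i k = 1 ∨ d2 i k = 2) :
    WD (fun k : Fin (m1 + m2 + r) => qfun m1 m2 r (k : ℕ)) (augDesign n n1 (m1 + m2) r d0 d1 d2) =
      Cconst n n1 (m1 + m2) r + ((n : ℝ) ^ 2 / ((n : ℝ) + n1) ^ 2) * ((3 : ℝ) / 2) ^ r * (WD (fun k : Fin (m1 + m2) => qfun m1 m2 0 (k : ℕ)) d0)
      + (1 / ((n : ℝ) + n1) ^ 2) * ((5 : ℝ) / 4) ^ m1 * ((23 : ℝ) / 18) ^ (m2 + r) *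
        ((∑ i : Fin (n + n1), ∑ j : Fin (n + n1),
            if n ≤ (i : ℕ) ∧ n ≤ (j : ℕ) ∧ i ≠ j then
              ((6 : ℝ) / 5) ^ Fco m1 (augDesign n n1 (m1 + m2) r d0 d1 d2) i j *
                ((27 : ℝ) / 23) ^ (Vco m1 m2 (augDesign n n1 (m1 + m2) r d0 d1 d2) i j + Tco (m1 + m2) (augDesign n n1 (m1 + m2) r d0 d1 d2) i j)
            else 0)
         + 2 * ∑ i : Fin (n + n1), ∑ j : Fin (n + n1),
            if (i : ℕ) < n ∧ n ≤ (j : ℕ) then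
              ((6 : ℝ) / 5) ^ Fco m1 (augDesign n n1 (m1 + m2) r d0 d1 d2) i j * ((27 : ℝ) / 23) ^ Vco m1 m2 (augDesign n n1 (m1 + m2) r d0 d1 d2) i j
            else 0) :=
  by
  classical
  -- abbreviations for the two summand products
  set f3 : Fin (n + n1) → Fin (n + n1) → ℝ := fun i j =>
    ∏ k : Fin (m1 + m2 + r),
      ((3 : ℝ) / 2 - |uVal (qfun m1 m2 r (k : ℕ)) (augDesign n n1 (m1 + m2) r d0 d1 d2 i k)
          - uVal (qfun m1 m2 r (k : ℕ)) (augDesign n n1 (m1 + m2) r d0 d1 d2 j k)| *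
        (1 - |uVal (qfun m1 m2 r (k : ℕ)) (augDesign n n1 (m1 + m2) r d0 d1 d2 i k)
          - uVal (qfun m1 m2 r (k : ℕ)) (augDesign n n1 (m1 + m2) r d0 d1 d2 j k)|)) with hf3
  set f0 : Fin n → Fin n → ℝ := fun a b =>
    ∏ k : Fin (m1 + m2),
      ((3 : ℝ) / 2 - |uVal (qfun m1 m2 0 (k : ℕ)) (d0 a k)
          - uVal (qfun m1 m2 0 (k : ℕ)) (d0 b k)| *
        (1 - |uVal (qfun m1 m2 0 (k : ℕ)) (d0 a k)
          - uVal (qfun m1 m2 0 (k : ℕ)) (d0 b k)|)) with hf0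
  have hq3 : ∀ k : Fin (m1 + m2 + r),
      (fun k : Fin (m1 + m2 + r) => qfun m1 m2 r (k : ℕ)) k
        = if (k : ℕ) < m1 then 2 else 3 := by
    intro k
    simp only [qfun]
    by_cases h : (k : ℕ) < m1
    · simp [h]
    · simp [h, k.isLt]
  have hq0 : ∀ k : Fin (m1 + m2),
      (fun k : Fin (m1 + m2) => qfun m1 m2 0 (k : ℕ)) k
        = if (k : ℕ) < m1 then 2 else 3 := by
    intro k
    simp only [qfun]
    by_cases h : (k : ℕ) < m1
    · simp [h]
    · have hk : (k : ℕ) < m1 + m2 + 0 := by have := k.isLt; omega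
      simp [h, hk]
  have keyD : ∀ i j : Fin (n + n1), f3 i j
      = (5 / 4 : ℝ) ^ m1 * (23 / 18 : ℝ) ^ (m2 + r)
        * (6 / 5 : ℝ) ^ Fco m1 (augDesign n n1 (m1 + m2) r d0 d1 d2) i j
        * (27 / 23 : ℝ) ^ Eco m1 (augDesign n n1 (m1 + m2) r d0 d1 d2) i j := fun i j =>
    my_key (by omega) (fun k : Fin (m1 + m2 + r) => qfun m1 m2 r (k : ℕ)) hq3
      (augDesign n n1 (m1 + m2) r d0 d1 d2) i j
      (fun k hk => ⟨aug_b2 d0 d1 d2 hd0 hd1 i k hk, aug_b2 d0 d1 d2 hd0 hd1 j k hk⟩)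
      (fun k hk => ⟨aug_b3 d0 d1 d2 hd0 hd1 hd2 i k hk, aug_b3 d0 d1 d2 hd0 hd1 hd2 j k hk⟩)
  have key0 : ∀ a b : Fin n, f0 a b
      = (5 / 4 : ℝ) ^ m1 * (23 / 18 : ℝ) ^ m2
        * (6 / 5 : ℝ) ^ Fco m1 d0 a b * (27 / 23 : ℝ) ^ Eco m1 d0 a b := fun a b =>
    my_key rfl (fun k : Fin (m1 + m2) => qfun m1 m2 0 (k : ℕ)) hq0 d0 a b
      (fun k hk => ⟨ut_lt2 hd0 hk a, ut_lt2 hd0 hk b⟩)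
      (fun k hk => ⟨ut_lt3 hd0 (not_lt.mpr hk) a, ut_lt3 hd0 (not_lt.mpr hk) b⟩)
  have hGdiag : ∀ i, f3 i i = ((3 : ℝ) / 2) ^ (m1 + m2 + r) := fun i =>
    my_prod_diag (fun k : Fin (m1 + m2 + r) => qfun m1 m2 r (k : ℕ))
      (augDesign n n1 (m1 + m2) r d0 d1 d2) i
  have hGsym : ∀ i j, f3 i j = f3 j i := fun i j =>
    my_prod_symm (fun k : Fin (m1 + m2 + r) => qfun m1 m2 r (k : ℕ))
      (augDesign n n1 (m1 + m2) r d0 d1 d2) i j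
  have hGinit : ∀ a b : Fin n,
      f3 (Fin.castAdd n1 a) (Fin.castAdd n1 b) = ((3 : ℝ) / 2) ^ r * f0 a b := by
    intro a b
    have hi : ((Fin.castAdd n1 a : Fin (n + n1)) : ℕ) < n := by simp
    have hj : ((Fin.castAdd n1 b : Fin (n + n1)) : ℕ) < n := by simp
    have ea : (⟨((Fin.castAdd n1 a : Fin (n + n1)) : ℕ), hi⟩ : Fin n) = a := Fin.ext (by simp)
    have eb : (⟨((Fin.castAdd n1 b : Fin (n + n1)) : ℕ), hj⟩ : Fin n) = b := Fin.ext (by simp)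
    rw [keyD _ _, Fco_init d0 d1 d2 hi hj, Eco_init d0 d1 d2 hi hj, ea, eb, key0 a b]
    have h1 : ((23 : ℝ) / 18) ^ r * ((27 : ℝ) / 23) ^ r = ((3 : ℝ) / 2) ^ r := by
      rw [← mul_pow]; norm_num
    rw [pow_add, pow_add, ← h1]; ring
  have hGmixed : ∀ (i j : Fin (n + n1)), (i : ℕ) < n → n ≤ (j : ℕ) →
      f3 i j = (5 / 4 : ℝ) ^ m1 * (23 / 18 : ℝ) ^ (m2 + r)
        * (((6 : ℝ) / 5) ^ Fco m1 (augDesign n n1 (m1 + m2) r d0 d1 d2) i j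
          * ((27 : ℝ) / 23) ^ Vco m1 m2 (augDesign n n1 (m1 + m2) r d0 d1 d2) i j) := by
    intro i j hi hj
    rw [keyD i j, Eco_mixed d0 d1 d2 hd2 hi (not_lt.mpr hj)]; ring
  have hGfollow : ∀ (i j : Fin (n + n1)), n ≤ (i : ℕ) → n ≤ (j : ℕ) →
      f3 i j = (5 / 4 : ℝ) ^ m1 * (23 / 18 : ℝ) ^ (m2 + r)
        * (((6 : ℝ) / 5) ^ Fco m1 (augDesign n n1 (m1 + m2) r d0 d1 d2) i j
          * ((27 : ℝ) / 23) ^ (Vco m1 m2 (augDesign n n1 (m1 + m2) r d0 d1 d2) i j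
              + Tco (m1 + m2) (augDesign n n1 (m1 + m2) r d0 d1 d2) i j)) := by
    intro i j hi hj
    rw [keyD i j, Eco_follow d0 d1 d2 hd2 (not_lt.mpr hi) (not_lt.mpr hj)]; ring
  -- decomposition of the double sum
  have hdec : ∀ i j : Fin (n + n1), f3 i j =
      (if (i : ℕ) < n ∧ (j : ℕ) < n then f3 i j else 0)
      + (if (i : ℕ) < n ∧ n ≤ (j : ℕ) then f3 i j else 0)
      + (if n ≤ (i : ℕ) ∧ (j : ℕ) < n then f3 i j else 0)
      + (if n ≤ (i : ℕ) ∧ n ≤ (j : ℕ) ∧ i ≠ j then f3 i j else 0)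
      + (if n ≤ (i : ℕ) ∧ n ≤ (j : ℕ) ∧ i = j then f3 i j else 0) := by
    intro i j
    by_cases h1 : (i : ℕ) < n <;> by_cases h2 : (j : ℕ) < n <;> by_cases h3 : i = j <;>
      simp [← not_lt, h1, h2, h3, ne_eq]
  have hA : (∑ i : Fin (n + n1), ∑ j : Fin (n + n1),
        if (i : ℕ) < n ∧ (j : ℕ) < n then f3 i j else 0)
      = ((3 : ℝ) / 2) ^ r * ∑ a : Fin n, ∑ b : Fin n, f0 a b := by
    have step1 : ∀ i : Fin (n + n1),
        (∑ j : Fin (n + n1), if (i : ℕ) < n ∧ (j : ℕ) < n then f3 i j else 0)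
        = (if (i : ℕ) < n then ∑ j : Fin (n + n1), (if (j : ℕ) < n then f3 i j else 0) else 0) := by
      intro i
      rw [← my_sum_ite_const]
      exact Finset.sum_congr rfl fun j _ => ite_and _ _ _ _
    rw [Finset.sum_congr rfl fun i _ => step1 i, my_sum_if_lt]
    rw [Finset.sum_congr rfl fun a (_ : a ∈ univ) => my_sum_if_lt (fun j => f3 (Fin.castAdd n1 a) j)]
    rw [Finset.sum_congr rfl fun a (_ : a ∈ univ) =>
      Finset.sum_congr rfl fun b (_ : b ∈ univ) => hGinit a b]
    simp only [← Finset.mul_sum]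
  have hB : (∑ i : Fin (n + n1), ∑ j : Fin (n + n1),
        if (i : ℕ) < n ∧ n ≤ (j : ℕ) then f3 i j else 0)
      = (5 / 4 : ℝ) ^ m1 * (23 / 18 : ℝ) ^ (m2 + r) *
        ∑ i : Fin (n + n1), ∑ j : Fin (n + n1),
          if (i : ℕ) < n ∧ n ≤ (j : ℕ) then
            ((6 : ℝ) / 5) ^ Fco m1 (augDesign n n1 (m1 + m2) r d0 d1 d2) i j
              * ((27 : ℝ) / 23) ^ Vco m1 m2 (augDesign n n1 (m1 + m2) r d0 d1 d2) i j
          else 0 := by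
    rw [Finset.mul_sum]
    refine Finset.sum_congr rfl fun i _ => ?_
    rw [Finset.mul_sum]
    refine Finset.sum_congr rfl fun j _ => ?_
    by_cases h : (i : ℕ) < n ∧ n ≤ (j : ℕ)
    · rw [if_pos h, if_pos h, hGmixed i j h.1 h.2]
    · rw [if_neg h, if_neg h, mul_zero]
  have hC : (∑ i : Fin (n + n1), ∑ j : Fin (n + n1),
        if n ≤ (i : ℕ) ∧ (j : ℕ) < n then f3 i j else 0)
      = (∑ i : Fin (n + n1), ∑ j : Fin (n + n1),
          if (i : ℕ) < n ∧ n ≤ (j : ℕ) then f3 i j else 0) := by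
    rw [Finset.sum_comm]
    refine Finset.sum_congr rfl fun i _ => Finset.sum_congr rfl fun j _ => ?_
    by_cases h : (i : ℕ) < n ∧ n ≤ (j : ℕ)
    · rw [if_pos ⟨h.2, h.1⟩, if_pos h, hGsym j i]
    · rw [if_neg (fun hc => h ⟨hc.2, hc.1⟩), if_neg h]
  have hD : (∑ i : Fin (n + n1), ∑ j : Fin (n + n1),
        if n ≤ (i : ℕ) ∧ n ≤ (j : ℕ) ∧ i ≠ j then f3 i j else 0)
      = (5 / 4 : ℝ) ^ m1 * (23 / 18 : ℝ) ^ (m2 + r) *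
        ∑ i : Fin (n + n1), ∑ j : Fin (n + n1),
          if n ≤ (i : ℕ) ∧ n ≤ (j : ℕ) ∧ i ≠ j then
            ((6 : ℝ) / 5) ^ Fco m1 (augDesign n n1 (m1 + m2) r d0 d1 d2) i j
              * ((27 : ℝ) / 23) ^ (Vco m1 m2 (augDesign n n1 (m1 + m2) r d0 d1 d2) i j
                  + Tco (m1 + m2) (augDesign n n1 (m1 + m2) r d0 d1 d2) i j)
          else 0 := by
    rw [Finset.mul_sum]
    refine Finset.sum_congr rfl fun i _ => ?_
    rw [Finset.mul_sum]
    refine Finset.sum_congr rfl fun j _ => ?_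
    by_cases h : n ≤ (i : ℕ) ∧ n ≤ (j : ℕ) ∧ i ≠ j
    · rw [if_pos h, if_pos h, hGfollow i j h.1 h.2.1]
    · rw [if_neg h, if_neg h, mul_zero]
  have hE : (∑ i : Fin (n + n1), ∑ j : Fin (n + n1),
        if n ≤ (i : ℕ) ∧ n ≤ (j : ℕ) ∧ i = j then f3 i j else 0)
      = (n1 : ℝ) * ((3 : ℝ) / 2) ^ (m1 + m2 + r) := by
    have e : ∀ i j : Fin (n + n1),
        (if n ≤ (i : ℕ) ∧ n ≤ (j : ℕ) ∧ i = j then f3 i j else 0)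
        = (if j = i then (if n ≤ (i : ℕ) then ((3 : ℝ) / 2) ^ (m1 + m2 + r) else 0) else 0) := by
      intro i j
      by_cases h3 : j = i
      · subst h3
        by_cases h : n ≤ (j : ℕ)
        · simp [h, hGdiag j]
        · simp [h]
      · rw [if_neg (fun hc => h3 hc.2.2.symm), if_neg h3]
    rw [Finset.sum_congr rfl fun i _ => Finset.sum_congr rfl fun j _ => e i j]
    have e2 : ∀ i : Fin (n + n1),
        (∑ j : Fin (n + n1), if j = i then
            (if n ≤ (i : ℕ) then ((3 : ℝ) / 2) ^ (m1 + m2 + r) else 0) else 0)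
        = (if n ≤ (i : ℕ) then ((3 : ℝ) / 2) ^ (m1 + m2 + r) else 0) := by
      intro i
      rw [Finset.sum_ite_eq' univ i]
      simp
    rw [Finset.sum_congr rfl fun i _ => e2 i, Finset.sum_ite, Finset.sum_const,
      Finset.sum_const_zero, add_zero, my_card_filter_le, nsmul_eq_mul,
      show n + n1 - n = n1 from by omega]
  have hsum : (∑ i : Fin (n + n1), ∑ j : Fin (n + n1), f3 i j)
      = ((3 : ℝ) / 2) ^ r * (∑ a : Fin n, ∑ b : Fin n, f0 a b)
        + (5 / 4 : ℝ) ^ m1 * (23 / 18 : ℝ) ^ (m2 + r) *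
            (∑ i : Fin (n + n1), ∑ j : Fin (n + n1),
              if (i : ℕ) < n ∧ n ≤ (j : ℕ) then
                ((6 : ℝ) / 5) ^ Fco m1 (augDesign n n1 (m1 + m2) r d0 d1 d2) i j
                  * ((27 : ℝ) / 23) ^ Vco m1 m2 (augDesign n n1 (m1 + m2) r d0 d1 d2) i j
              else 0)
        + (5 / 4 : ℝ) ^ m1 * (23 / 18 : ℝ) ^ (m2 + r) *
            (∑ i : Fin (n + n1), ∑ j : Fin (n + n1),
              if (i : ℕ) < n ∧ n ≤ (j : ℕ) then
                ((6 : ℝ) / 5) ^ Fco m1 (augDesign n n1 (m1 + m2) r d0 d1 d2) i j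
                  * ((27 : ℝ) / 23) ^ Vco m1 m2 (augDesign n n1 (m1 + m2) r d0 d1 d2) i j
              else 0)
        + (5 / 4 : ℝ) ^ m1 * (23 / 18 : ℝ) ^ (m2 + r) *
            (∑ i : Fin (n + n1), ∑ j : Fin (n + n1),
              if n ≤ (i : ℕ) ∧ n ≤ (j : ℕ) ∧ i ≠ j then
                ((6 : ℝ) / 5) ^ Fco m1 (augDesign n n1 (m1 + m2) r d0 d1 d2) i j
                  * ((27 : ℝ) / 23) ^ (Vco m1 m2 (augDesign n n1 (m1 + m2) r d0 d1 d2) i j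
                      + Tco (m1 + m2) (augDesign n n1 (m1 + m2) r d0 d1 d2) i j)
              else 0)
        + (n1 : ℝ) * ((3 : ℝ) / 2) ^ (m1 + m2 + r) := by
    rw [Finset.sum_congr rfl fun i (_ : i ∈ univ) =>
      Finset.sum_congr rfl fun j (_ : j ∈ univ) => hdec i j]
    simp only [Finset.sum_add_distrib]
    rw [hA, hB, hC, hB, hD, hE]
  have hWD3 : WD (fun k : Fin (m1 + m2 + r) => qfun m1 m2 r (k : ℕ))
      (augDesign n n1 (m1 + m2) r d0 d1 d2)
      = -((4 : ℝ) / 3) ^ (m1 + m2 + r)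
        + (1 / ((n + n1 : ℕ) : ℝ) ^ 2) * ∑ i : Fin (n + n1), ∑ j : Fin (n + n1), f3 i j := rfl
  have hWD0 : WD (fun k : Fin (m1 + m2) => qfun m1 m2 0 (k : ℕ)) d0
      = -((4 : ℝ) / 3) ^ (m1 + m2)
        + (1 / (n : ℝ) ^ 2) * ∑ a : Fin n, ∑ b : Fin n, f0 a b := rfl
  have hn0 : (n : ℝ) ≠ 0 := Nat.cast_ne_zero.mpr (by omega)
  have hS0 : (∑ a : Fin n, ∑ b : Fin n, f0 a b)
      = (WD (fun k : Fin (m1 + m2) => qfun m1 m2 0 (k : ℕ)) d0 + ((4 : ℝ) / 3) ^ (m1 + m2))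
          * (n : ℝ) ^ 2 := by
    rw [hWD0]
    field_simp
    ring
  have hxy : ((n : ℝ) + n1) ≠ 0 := by
    have h1 : (0 : ℝ) < (n : ℝ) := by exact_mod_cast Nat.pos_of_ne_zero (by omega)
    have h2 : (0 : ℝ) ≤ (n1 : ℝ) := Nat.cast_nonneg n1
    positivity
  rw [hWD3, hsum, hS0, Cconst]
  rw [pow_add ((4 : ℝ) / 3) (m1 + m2) r]
  push_cast
  field_simp
  ring


end CAUD

end
end
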